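/- arXiv:1907.08047 — 5 statements merged into one kernel-verified Lean document; each statement's English description precedes it below -/
import Mathlib

section
/- Let τ > 0 be a random time, Z a random variable, W a Brownian motion, with τ, Z, W independent, and let ζ_t = W_{t∧τ} − ((t∧τ)/τ)W_τ + ((t∧τ)/τ)Z. Then for every t > 0, P(ζ_t = Z and τ > t) = 0; hence the process (1_{τ ≤ t}, t > 0) is a modification of (1_{ζ_t = Z}, t > 0). -/
open MeasureTheory ProbabilityTheory Real Set

noncomputable def gaussD (v x m : ℝ) : ℝ :=
  (Real.sqrt (2 * Real.pi * v))⁻¹ * Real.exp (-((x - m) ^ 2) / (2 * v))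

open MeasureTheory ProbabilityTheory Real Set Filter NNReal

noncomputable def qrat (n : ℕ) (r : ℝ) : ℝ := (⌈r * 2 ^ n⌉ : ℤ) / 2 ^ n

noncomputable def evE : ℝ × (ℝ → ℝ) → EReal :=
  fun p => Filter.limsup (fun n => ((p.2 (qrat n p.1) : ℝ) : EReal)) Filter.atTop

noncomputable def ev (r : ℝ) (w : ℝ → ℝ) : ℝ := (evE (r, w)).toReal

lemma measurable_evE : Measurable evE := by
  apply Measurable.limsup
  intro n
  apply measurable_coe_real_ereal.comp
  have h1 : Measurable (fun p : (ℝ → ℝ) × ℤ => p.1 ((p.2 : ℝ) / 2 ^ n)) :=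
    measurable_from_prod_countable_left fun k => measurable_pi_apply ((k : ℝ) / 2 ^ n)
  have h2 : Measurable (fun p : ℝ × (ℝ → ℝ) => (p.2, ⌈p.1 * 2 ^ n⌉)) :=
    measurable_snd.prodMk ((measurable_fst.mul_const _).ceil)
  exact h1.comp h2

lemma measurable_ev (r : ℝ) : Measurable (ev r) :=
  (measurable_evE.comp (measurable_prodMk_left)).ereal_toReal

lemma tendsto_qrat (r : ℝ) : Tendsto (fun n => qrat n r) atTop (nhds r) := by
  have h1 : ∀ n : ℕ, r ≤ qrat n r := by
    intro n
    rw [qrat, le_div_iff₀ (by positivity)]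
    exact Int.le_ceil _
  have h2 : ∀ n : ℕ, qrat n r ≤ r + (1/2)^n := by
    intro n
    rw [qrat, div_le_iff₀ (by positivity)]
    calc ((⌈r * 2^n⌉ : ℤ) : ℝ) ≤ r * 2^n + 1 := le_of_lt (Int.ceil_lt_add_one _)
    _ = (r + (1/2)^n) * 2^n := by
      rw [add_mul, ← mul_pow, one_div, inv_mul_cancel₀ (two_ne_zero), one_pow]
  have hupper : Tendsto (fun n : ℕ => r + (1/2)^n) atTop (nhds r) := by
    have := tendsto_pow_atTop_nhds_zero_of_lt_one (by norm_num : (0:ℝ) ≤ 1/2) (by norm_num)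
    simpa using tendsto_const_nhds.add this
  exact tendsto_of_tendsto_of_tendsto_of_le_of_le tendsto_const_nhds hupper h1 h2

lemma ev_eq {w : ℝ → ℝ} (hw : Continuous w) (r : ℝ) : ev r w = w r := by
  have h1 : Tendsto (fun n => w (qrat n r)) atTop (nhds (w r)) :=
    (hw.tendsto r).comp (tendsto_qrat r)
  have h2 : Tendsto (fun n => ((w (qrat n r) : ℝ) : EReal)) atTop (nhds ((w r : ℝ) : EReal)) :=
    (continuous_coe_real_ereal.tendsto _).comp h1
  rw [ev, evE]
  simp only
  rw [h2.limsup_eq, EReal.toReal_coe]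

lemma gaussian_singleton {v : ℝ≥0} (hv : v ≠ 0) (m x : ℝ) : gaussianReal m v {x} = 0 :=
  gaussianReal_absolutelyContinuous m hv (Real.volume_singleton)

lemma indep_hit_zero {Ω : Type*} [MeasurableSpace Ω] (P : Measure Ω) [IsProbabilityMeasure P]
    {X Y : Ω → ℝ} (hX : Measurable X) (hY : Measurable Y) (hind : IndepFun Y X P)
    (hatom : ∀ c : ℝ, P.map X {c} = 0) {f : ℝ → ℝ} (hf : Measurable f) :
    P {ω | X ω = f (Y ω)} = 0 := by
  have hS : MeasurableSet {p : ℝ × ℝ | p.2 = f p.1} :=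
    measurableSet_eq_fun measurable_snd (hf.comp measurable_fst)
  have hmap := (indepFun_iff_map_prod_eq_prod_map_map hY.aemeasurable hX.aemeasurable).mp hind
  haveI := Measure.isProbabilityMeasure_map (μ := P) hX.aemeasurable
  haveI := Measure.isProbabilityMeasure_map (μ := P) hY.aemeasurable
  have heq : {ω | X ω = f (Y ω)} = (fun ω => (Y ω, X ω)) ⁻¹' {p | p.2 = f p.1} := rfl
  rw [heq, ← Measure.map_apply (hY.prodMk hX) hS, hmap, Measure.prod_apply hS]
  have hz : ∀ y : ℝ, (P.map X) (Prod.mk y ⁻¹' {p : ℝ × ℝ | p.2 = f p.1}) = 0 := by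
    intro y
    have : Prod.mk y ⁻¹' {p : ℝ × ℝ | p.2 = f p.1} = {f y} := by
      ext x; simp [Set.mem_preimage, Set.mem_setOf_eq]
    rw [this]
    exact hatom _
  rw [lintegral_congr hz, lintegral_zero]

def IsBrownianMotion {Ω : Type*} [MeasurableSpace Ω] (P : Measure Ω)
    (W : ℝ → Ω → ℝ) : Prop :=
  (∀ ω, W 0 ω = 0) ∧ (∀ ω, Continuous fun t => W t ω) ∧
  (∀ t, Measurable (W t)) ∧
  (∀ s t : ℝ, 0 ≤ s → s ≤ t →
    P.map (fun ω => W t ω - W s ω) = gaussianReal 0 (t - s).toNNReal) ∧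
  (∀ s t u v : ℝ, 0 ≤ s → s ≤ t → t ≤ u → u ≤ v →
    IndepFun (fun ω => W t ω - W s ω) (fun ω => W v ω - W u ω) P)

noncomputable def bridge {Ω : Type*} (W : ℝ → Ω → ℝ) (r z t : ℝ) (ω : Ω) : ℝ :=
  W (min t r) ω - (min t r / r) * W r ω + (min t r / r) * z

noncomputable def rbridge {Ω : Type*} (W : ℝ → Ω → ℝ) (τ Z : Ω → ℝ) (t : ℝ) (ω : Ω) : ℝ :=
  bridge W (τ ω) (Z ω) t ω

def IndepLPW {Ω : Type*} [MeasurableSpace Ω] (P : Measure Ω) (τ Z : Ω → ℝ)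
    (W : ℝ → Ω → ℝ) : Prop :=
  IndepFun τ Z P ∧ IndepFun (fun ω => (τ ω, Z ω)) (fun ω (t : ℝ) => W t ω) P

noncomputable def natFc {Ω : Type*} [MeasurableSpace Ω] (P : Measure Ω)
    (X : ℝ → Ω → ℝ) (t : ℝ) : MeasurableSpace Ω :=
  (⨆ s ∈ Set.Iic t, MeasurableSpace.comap (X s) Real.measurableSpace) ⊔
    MeasurableSpace.generateFrom {s : Set Ω | P s = 0}

theorem stmt8 {Ω : Type*} [MeasurableSpace Ω] (P : Measure Ω) [IsProbabilityMeasure P]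
    (W : ℝ → Ω → ℝ) (hW : IsBrownianMotion P W)
    (τ Z : Ω → ℝ) (hτ : Measurable τ) (hZ : Measurable Z) (hτpos : ∀ ω, 0 < τ ω)
    (hInd : IndepLPW P τ Z W) :
    ∀ t : ℝ, 0 < t →
      P {ω | rbridge W τ Z t ω = Z ω ∧ t < τ ω} = 0 ∧
      ((fun ω => if τ ω ≤ t then (1 : ℝ) else 0) =ᵐ[P]
        fun ω => if rbridge W τ Z t ω = Z ω then (1 : ℝ) else 0) := by
  obtain ⟨hW0, hWc, hWm, hWlaw, hWind⟩ := hW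
  intro t ht0
  have hpath : Measurable (fun ω (s : ℝ) => W s ω : Ω → ℝ → ℝ) :=
    measurable_pi_lambda _ hWm
  haveI : IsProbabilityMeasure (P.map (fun ω => (τ ω, Z ω))) :=
    Measure.isProbabilityMeasure_map (μ := P) ((hτ.prodMk hZ).aemeasurable)
  haveI : IsProbabilityMeasure (P.map (fun ω (s : ℝ) => W s ω)) :=
    Measure.isProbabilityMeasure_map (μ := P) hpath.aemeasurable
  have hXlaw : P.map (W t) = gaussianReal 0 t.toNNReal := by
    have h := hWlaw 0 t le_rfl ht0.le
    have he : (fun ω => W t ω - W 0 ω) = W t := funext fun ω => by rw [hW0 ω, sub_zero]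
    rw [he] at h
    rw [h, sub_zero]
  have hatom : ∀ c : ℝ, P.map (W t) {c} = 0 := by
    intro c
    rw [hXlaw]
    exact gaussian_singleton (by simpa using (Real.toNNReal_pos.mpr ht0).ne') 0 c
  have hslice : ∀ r z : ℝ, t < r → P {ω | W t ω - (t/r) * W r ω + (t/r) * z = z} = 0 := by
    intro r z hr
    have hr0 : 0 < r := ht0.trans hr
    have ha : t / r < 1 := (div_lt_one hr0).mpr hr
    have h1a : (0:ℝ) < 1 - t / r := by linarith
    set f : ℝ → ℝ := fun y => (z * (1 - t/r) + (t/r) * y) / (1 - t/r) with hf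
    have hfm : Measurable f :=
      (measurable_const.add (measurable_const.mul measurable_id)).div_const _
    have hind : IndepFun (fun ω => W r ω - W t ω) (W t) P := by
      have h := hWind 0 t t r le_rfl ht0.le le_rfl hr.le
      have he : (fun ω => W t ω - W 0 ω) = W t := funext fun ω => by rw [hW0 ω, sub_zero]
      rw [he] at h
      exact h.symm
    have hset : {ω | W t ω - (t/r) * W r ω + (t/r) * z = z}
        = {ω | W t ω = f ((fun ω => W r ω - W t ω) ω)} := by
      ext ω
      simp only [mem_setOf_eq, hf]
      rw [eq_div_iff h1a.ne']
      constructor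
      · intro h; linear_combination h
      · intro h; linear_combination h
    rw [hset]
    exact indep_hit_zero P (hWm t) ((hWm r).sub (hWm t)) hind hatom hfm
  set S : Set ((ℝ × ℝ) × (ℝ → ℝ)) :=
    {p | t < p.1.1 ∧ p.2 t - (t / p.1.1) * ev p.1.1 p.2 + (t / p.1.1) * p.1.2 = p.1.2}
    with hSdef
  have hevm : Measurable (fun p : (ℝ × ℝ) × (ℝ → ℝ) => ev p.1.1 p.2) :=
    (measurable_evE.comp ((measurable_fst.fst).prodMk measurable_snd)).ereal_toReal
  have hSm : MeasurableSet S := by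
    refine (measurableSet_lt measurable_const measurable_fst.fst).inter
      (measurableSet_eq_fun ?_ measurable_fst.snd)
    have hdiv : Measurable (fun p : (ℝ × ℝ) × (ℝ → ℝ) => t / p.1.1) :=
      measurable_const.div measurable_fst.fst
    exact (((measurable_pi_apply t).comp measurable_snd).sub (hdiv.mul hevm)).add
      (hdiv.mul measurable_fst.snd)
  have hE : {ω | rbridge W τ Z t ω = Z ω ∧ t < τ ω}
      = (fun ω => ((τ ω, Z ω), fun s => W s ω)) ⁻¹' S := by
    ext ω
    have hevω : ev (τ ω) (fun s => W s ω) = W (τ ω) ω := ev_eq (hWc ω) (τ ω)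
    simp only [mem_setOf_eq, mem_preimage, hSdef, hevω, rbridge, bridge]
    constructor
    · rintro ⟨h, hlt⟩
      rw [min_eq_left hlt.le] at h
      exact ⟨hlt, h⟩
    · rintro ⟨hlt, h⟩
      rw [min_eq_left hlt.le]
      exact ⟨h, hlt⟩
  have hΨ : Measurable (fun ω => ((τ ω, Z ω), fun s => W s ω) : Ω → (ℝ × ℝ) × (ℝ → ℝ)) :=
    (hτ.prodMk hZ).prodMk hpath
  have hprodlaw : P.map (fun ω => ((τ ω, Z ω), fun s => W s ω))
      = (P.map (fun ω => (τ ω, Z ω))).prod (P.map (fun ω (s : ℝ) => W s ω)) :=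
    (indepFun_iff_map_prod_eq_prod_map_map ((hτ.prodMk hZ).aemeasurable)
      hpath.aemeasurable).mp hInd.2
  have key : P {ω | rbridge W τ Z t ω = Z ω ∧ t < τ ω} = 0 := by
    rw [hE, ← Measure.map_apply hΨ hSm, hprodlaw, Measure.prod_apply hSm]
    have hzero : ∀ x : ℝ × ℝ, (P.map (fun ω (s : ℝ) => W s ω)) (Prod.mk x ⁻¹' S) = 0 := by
      rintro ⟨r, z⟩
      by_cases hr : t < r
      · have hA' : MeasurableSet {w : ℝ → ℝ | w t - (t/r) * w r + (t/r) * z = z} :=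
          measurableSet_eq_fun (((measurable_pi_apply t).sub
            (measurable_const.mul (measurable_pi_apply r))).add measurable_const)
            measurable_const
        have hAS : Prod.mk (r, z) ⁻¹' S
            = {w : ℝ → ℝ | w t - (t/r) * ev r w + (t/r) * z = z} := by
          ext w
          simp [hSdef, hr]
        have hae : ∀ᵐ w ∂(P.map (fun ω (s : ℝ) => W s ω)), ev r w = w r := by
          rw [ae_iff]
          have hNm : MeasurableSet {w : ℝ → ℝ | ev r w = w r} :=
            measurableSet_eq_fun (measurable_ev r) (measurable_pi_apply r)
          rw [show {a : ℝ → ℝ | ¬ ev r a = a r} = {w : ℝ → ℝ | ev r w = w r}ᶜ from rfl,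
            Measure.map_apply hpath hNm.compl]
          have hemp : (fun ω (s : ℝ) => W s ω) ⁻¹' {w : ℝ → ℝ | ev r w = w r}ᶜ = ∅ := by
            ext ω
            simp [ev_eq (hWc ω) r]
          rw [hemp, measure_empty]
        have hcongr : (P.map (fun ω (s : ℝ) => W s ω)) (Prod.mk (r, z) ⁻¹' S)
            = (P.map (fun ω (s : ℝ) => W s ω)) {w : ℝ → ℝ | w t - (t/r) * w r + (t/r) * z = z} := by
          rw [hAS]
          apply measure_congr
          rw [Filter.eventuallyEq_set]
          filter_upwards [hae] with w hw
          rw [hw]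
        rw [hcongr, Measure.map_apply hpath hA']
        exact hslice r z hr
      · have hemp : Prod.mk (r, z) ⁻¹' S = ∅ := by
          ext w
          simp [hSdef, hr]
        rw [hemp, measure_empty]
    rw [lintegral_congr hzero, lintegral_zero]
  refine ⟨key, ?_⟩
  rw [Filter.EventuallyEq, ae_iff]
  apply measure_mono_null _ key
  intro ω hω
  simp only [mem_setOf_eq] at hω ⊢
  by_cases h1 : τ ω ≤ t
  · exfalso
    apply hω
    have hz : rbridge W τ Z t ω = Z ω := by
      rw [rbridge, bridge, min_eq_right h1, div_self (hτpos ω).ne']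
      ring
    simp [h1, hz]
  · push_neg at h1
    refine ⟨?_, h1⟩
    by_contra hne
    exact hω (by simp [not_le.mpr h1, hne])
end

section
/- If the pinning point Z is a discrete random variable with values {z_1, z_2, ...}, then for every t > 0 one has, P-almost surely, 1_{τ ≤ t} = Σ_{i≥1} 1_{ζ_t = z_i}; in particular the event {τ ≤ t} belongs to σ(ζ_t) ∨ N_P. -/
open MeasureTheory ProbabilityTheory Real Set

open Filter Topology in
noncomputable def dy (n : ℕ) (r : ℝ) : ℝ := (⌈r * 2^n⌉ : ℤ) / 2^n

open Filter Topology in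
lemma dy_tendsto (r : ℝ) : Tendsto (fun n => dy n r) atTop (𝓝 r) := by
  have h2 : Tendsto (fun n : ℕ => r + ((2:ℝ)^n)⁻¹) atTop (𝓝 (r + 0)) := by
    refine tendsto_const_nhds.add ?_
    have := tendsto_pow_atTop_nhds_zero_of_lt_one (by norm_num : (0:ℝ) ≤ 2⁻¹) (by norm_num)
    simpa [inv_pow] using this
  rw [add_zero] at h2
  refine tendsto_of_tendsto_of_tendsto_of_le_of_le tendsto_const_nhds h2 ?_ ?_
  · intro n
    have hp : (0:ℝ) < 2^n := by positivity
    show r ≤ dy n r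
    rw [show dy n r = (⌈r * 2^n⌉ : ℤ) / 2^n from rfl, le_div_iff₀ hp]
    exact Int.le_ceil _
  · intro n
    have hp : (0:ℝ) < 2^n := by positivity
    show dy n r ≤ r + ((2:ℝ)^n)⁻¹
    rw [show dy n r = (⌈r * 2^n⌉ : ℤ) / 2^n from rfl, div_le_iff₀ hp]
    have := (Int.ceil_lt_add_one (r * 2^n)).le
    have h1 : (r + ((2:ℝ)^n)⁻¹) * 2^n = r * 2^n + 1 := by field_simp
    rw [h1]; exact this

lemma measurable_eval_dy (n : ℕ) :
    Measurable (fun p : (ℝ × ℝ) × (ℝ → ℝ) => p.2 (dy n p.1.1)) := by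
  have F : Measurable fun q : (ℝ → ℝ) × ℤ => q.1 ((q.2 : ℝ)/2^n) :=
    measurable_from_prod_countable_left (fun k => measurable_pi_apply ((k : ℝ)/2^n))
  have G : Measurable fun p : (ℝ × ℝ) × (ℝ → ℝ) => (p.2, (⌈p.1.1 * 2^n⌉ : ℤ)) :=
    measurable_snd.prodMk (((measurable_fst.comp measurable_fst).mul_const _).ceil)
  exact F.comp G

lemma gauss_zero {Ω : Type*} [MeasurableSpace Ω] (P : Measure Ω) [IsProbabilityMeasure P]
    (W : ℝ → Ω → ℝ) (hW : IsBrownianMotion P W) {t r : ℝ} (ht : 0 < t) (htr : t < r)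
    (c : ℝ) : P {ω | W t ω - (t/r) * W r ω = c} = 0 := by
  obtain ⟨hW0, hWc, hWm, hWg, hWi⟩ := hW
  set X : Ω → ℝ := fun ω => W t ω with hX
  set Y : Ω → ℝ := fun ω => W r ω - W t ω with hY
  have hXm : Measurable X := hWm t
  have hYm : Measurable Y := (hWm r).sub (hWm t)
  have hsub : (fun ω => W t ω - W 0 ω) = X := by funext ω; rw [hW0 ω]; simp [hX]
  have hlawX : P.map X = gaussianReal 0 t.toNNReal := by
    have := hWg 0 t le_rfl ht.le
    rw [hsub] at this; simpa using this
  have hXY : IndepFun Y X P := by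
    have := hWi 0 t t r le_rfl ht.le le_rfl htr.le
    rw [hsub] at this; exact this.symm
  have hr0 : (0:ℝ) < r := ht.trans htr
  have hk : t/r < 1 := (div_lt_one hr0).mpr htr
  set a : ℝ := 1 - t/r with ha
  have ha0 : a ≠ 0 := by simp only [ha]; intro h; nlinarith
  set g : ℝ → ℝ := fun y => (c + (t/r)*y)/a with hg
  have hgm : Measurable g := by fun_prop
  have hkey : ∀ ω, (W t ω - (t/r) * W r ω = c) ↔ (X ω = g (Y ω)) := by
    intro ω
    rw [hg]
    simp only
    rw [eq_div_iff ha0]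
    constructor <;> intro h
    · simp only [hX, hY, ha]; linear_combination h
    · simp only [hX, hY, ha] at h; linear_combination h
  have hset : {ω | W t ω - (t/r) * W r ω = c} =
      (fun ω => (Y ω, X ω)) ⁻¹' {q : ℝ × ℝ | q.2 = g q.1} := by
    ext ω; exact hkey ω
  have hSm : MeasurableSet {q : ℝ × ℝ | q.2 = g q.1} :=
    measurableSet_eq_fun measurable_snd (hgm.comp measurable_fst)
  rw [hset, ← Measure.map_apply (hYm.prodMk hXm) hSm,
    (indepFun_iff_map_prod_eq_prod_map_map hYm.aemeasurable hXm.aemeasurable).mp hXY]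
  haveI : IsProbabilityMeasure (P.map X) := Measure.isProbabilityMeasure_map hXm.aemeasurable
  rw [Measure.prod_apply hSm]
  have hz : ∀ y : ℝ, (P.map X) (Prod.mk y ⁻¹' {q : ℝ × ℝ | q.2 = g q.1}) = 0 := by
    intro y
    have : (Prod.mk y ⁻¹' {q : ℝ × ℝ | q.2 = g q.1}) = {g y} := by
      ext x; simp [Set.mem_preimage]
    rw [this, hlawX]
    have hv : t.toNNReal ≠ 0 := by
      simp [Real.toNNReal_eq_zero]; linarith
    exact (gaussianReal_absolutelyContinuous 0 hv) (volume_singleton)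
  simp only [hz, lintegral_zero]

open Filter Topology in
theorem stmt9 {Ω : Type*} [MeasurableSpace Ω] (P : Measure Ω) [IsProbabilityMeasure P]
    (W : ℝ → Ω → ℝ) (hW : IsBrownianMotion P W)
    (τ Z : Ω → ℝ) (hτ : Measurable τ) (hZ : Measurable Z) (hτpos : ∀ ω, 0 < τ ω)
    (hInd : IndepLPW P τ Z W)
    (zs : ℕ → ℝ) (hinj : Function.Injective zs) (hZd : ∀ ω, ∃ i, Z ω = zs i) :
    ∀ t : ℝ, 0 < t →
      ((fun ω => if τ ω ≤ t then (1 : ℝ) else 0) =ᵐ[P]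
        fun ω => ∑' i, if rbridge W τ Z t ω = zs i then (1 : ℝ) else 0) ∧
      MeasurableSet[MeasurableSpace.comap (rbridge W τ Z t) Real.measurableSpace ⊔
          MeasurableSpace.generateFrom {s : Set Ω | P s = 0}]
        {ω | τ ω ≤ t} := by
  obtain ⟨hInd1, hInd2⟩ := hInd
  intro t ht
  -- path map and pairing
  set pm : Ω → (ℝ → ℝ) := fun ω s => W s ω with hpm
  have hpmm : Measurable pm := measurable_pi_lambda _ (fun s => hW.2.2.1 s)
  set Φ : Ω → (ℝ × ℝ) × (ℝ → ℝ) := fun ω => ((τ ω, Z ω), pm ω) with hΦ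
  have hΦm : Measurable Φ := (hτ.prodMk hZ).prodMk hpmm
  -- approximating functionals
  set Bf : ℕ → ((ℝ × ℝ) × (ℝ → ℝ)) → ℝ :=
    fun n p => p.2 t - (t / p.1.1) * p.2 (dy n p.1.1) + (t / p.1.1) * p.1.2 with hBf
  have hBm : ∀ n, Measurable (Bf n) := by
    intro n
    have e1 : Measurable fun p : (ℝ × ℝ) × (ℝ → ℝ) => p.2 t :=
      (measurable_pi_apply t).comp measurable_snd
    have e2 := measurable_eval_dy n
    have e3 : Measurable fun p : (ℝ × ℝ) × (ℝ → ℝ) => t / p.1.1 :=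
      measurable_const.div (measurable_fst.comp measurable_fst)
    have e4 : Measurable fun p : (ℝ × ℝ) × (ℝ → ℝ) => p.1.2 :=
      measurable_snd.comp measurable_fst
    exact (e1.sub (e3.mul e2)).add (e3.mul e4)
  -- pointwise convergence of approximating functionals
  have hTend : ∀ (r z : ℝ) (ω : Ω), 0 < r →
      Tendsto (fun n => W t ω - (t/r) * W (dy n r) ω + (t/r) * z) atTop
        (𝓝 (W t ω - (t/r) * W r ω + (t/r) * z)) := by
    intro r z ω _
    have hc : Continuous fun s => W s ω := hW.2.1 ω
    have h1 : Tendsto (fun n => W (dy n r) ω) atTop (𝓝 (W r ω)) :=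
      (hc.tendsto r).comp (dy_tendsto r)
    exact (tendsto_const_nhds.sub (tendsto_const_nhds.mul h1)).add tendsto_const_nhds
  -- measurable events on product space
  set A : ℕ → Set ((ℝ × ℝ) × (ℝ → ℝ)) :=
    fun i => {p | t < p.1.1} ∩ {p | Tendsto (fun n => Bf n p) atTop (𝓝 (zs i))} with hA
  have hAm : ∀ i, MeasurableSet (A i) := fun i =>
    (measurableSet_lt measurable_const (measurable_fst.comp measurable_fst)).inter
      (measurableSet_tendsto _ hBm)
  -- identification of preimage
  have hNiff : ∀ (i : ℕ) (ω : Ω), Φ ω ∈ A i ↔ (t < τ ω ∧ rbridge W τ Z t ω = zs i) := by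
    intro i ω
    have hrb : t < τ ω → rbridge W τ Z t ω
        = W t ω - (t/τ ω) * W (τ ω) ω + (t/τ ω) * Z ω := by
      intro h1
      rw [rbridge, bridge, min_eq_left h1.le]
    have hBeq : ∀ n, Bf n (Φ ω) = W t ω - (t/τ ω) * W (dy n (τ ω)) ω + (t/τ ω) * Z ω := by
      intro n; simp only [hBf, hΦ, hpm]
    constructor
    · rintro ⟨h1, h2⟩
      have h1' : t < τ ω := h1
      refine ⟨h1', ?_⟩
      rw [hrb h1']
      simp only [Set.mem_setOf_eq] at h2
      rw [funext hBeq] at h2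
      exact tendsto_nhds_unique (hTend (τ ω) (Z ω) ω (hτpos ω)) h2
    · rintro ⟨h1, h2⟩
      refine ⟨h1, ?_⟩
      show Tendsto (fun n => Bf n (Φ ω)) atTop (𝓝 (zs i))
      rw [funext hBeq, ← h2, hrb h1]
      exact hTend (τ ω) (Z ω) ω (hτpos ω)
  -- null sets
  set Nn : ℕ → Set Ω := fun i => {ω | t < τ ω ∧ rbridge W τ Z t ω = zs i} with hNn
  have hNpre : ∀ i, Nn i = Φ ⁻¹' A i := by
    intro i; ext ω; exact (hNiff i ω).symm
  have hmap : P.map Φ = (P.map (fun ω => (τ ω, Z ω))).prod (P.map pm) :=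
    (indepFun_iff_map_prod_eq_prod_map_map (hτ.prodMk hZ).aemeasurable
      hpmm.aemeasurable).mp hInd2
  haveI : IsProbabilityMeasure (P.map pm) := Measure.isProbabilityMeasure_map hpmm.aemeasurable
  have hNull : ∀ i, P (Nn i) = 0 := by
    intro i
    rw [hNpre, ← Measure.map_apply hΦm (hAm i), hmap, Measure.prod_apply (hAm i)]
    have hsec : ∀ q : ℝ × ℝ, (P.map pm) (Prod.mk q ⁻¹' A i) = 0 := by
      intro q
      rcases le_or_gt q.1 t with h | h
      · have : Prod.mk q ⁻¹' A i = ∅ := by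
          ext w
          simp only [Set.mem_preimage, hA, Set.mem_inter_iff, Set.mem_setOf_eq,
            Set.mem_empty_iff_false, iff_false, not_and]
          intro hc
          exact absurd hc (not_lt.mpr h)
        rw [this]; simp
      · have hsm : MeasurableSet (Prod.mk q ⁻¹' A i) := measurable_prodMk_left (hAm i)
        rw [Measure.map_apply hpmm hsm]
        have hq0 : (0:ℝ) < q.1 := ht.trans h
        have hpre : pm ⁻¹' (Prod.mk q ⁻¹' A i)
            = {ω | W t ω - (t/q.1) * W q.1 ω = zs i - (t/q.1) * q.2} := by
          ext ω
          simp only [Set.mem_preimage, hA, Set.mem_inter_iff, Set.mem_setOf_eq]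
          have hBeq : ∀ n, Bf n (q, pm ω)
              = W t ω - (t/q.1) * W (dy n q.1) ω + (t/q.1) * q.2 := by
            intro n; simp only [hBf, hpm]
          constructor
          · rintro ⟨-, h2⟩
            rw [funext hBeq] at h2
            have := tendsto_nhds_unique (hTend q.1 q.2 ω hq0) h2
            linarith
          · intro h2
            refine ⟨h, ?_⟩
            show Tendsto (fun n => Bf n (q, pm ω)) atTop (𝓝 (zs i))
            rw [funext hBeq]
            have heq : W t ω - (t/q.1) * W q.1 ω + (t/q.1) * q.2 = zs i := by linarith
            rw [← heq]
            exact hTend q.1 q.2 ω hq0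
        rw [hpre]
        exact gauss_zero P W hW ht h _
    simp only [hsec, lintegral_zero]
  set Nset : Set Ω := ⋃ i, Nn i with hNset
  have hNsetnull : P Nset = 0 := measure_iUnion_null hNull
  have hrbZ : ∀ ω, τ ω ≤ t → rbridge W τ Z t ω = Z ω := by
    intro ω hle
    rw [rbridge, bridge, min_eq_right hle, div_self (hτpos ω).ne']
    ring
  constructor
  · refine ae_iff.mpr (measure_mono_null (fun ω hω => ?_) hNsetnull)
    simp only [Set.mem_setOf_eq] at hω
    by_contra hωN
    apply hω
    rcases le_or_gt (τ ω) t with hle | hlt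
    · rw [if_pos hle, hrbZ ω hle]
      obtain ⟨i0, hi0⟩ := hZd ω
      rw [tsum_eq_single i0 ?_]
      · rw [if_pos hi0]
      · intro j hj
        rw [if_neg]
        intro hc
        exact hj (hinj (hc.symm.trans hi0))
    · rw [if_neg (not_le.mpr hlt)]
      have hzero : ∀ i, (if rbridge W τ Z t ω = zs i then (1:ℝ) else 0) = 0 := by
        intro i
        rw [if_neg]
        intro hc
        exact hωN (Set.mem_iUnion.mpr ⟨i, hlt, hc⟩)
      exact ((tsum_congr hzero).trans tsum_zero).symm
  · set B : Set Ω := rbridge W τ Z t ⁻¹' (Set.range zs) with hB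
    have hBmem : MeasurableSet[MeasurableSpace.comap (rbridge W τ Z t)
        Real.measurableSpace] B :=
      ⟨Set.range zs, (Set.countable_range zs).measurableSet, rfl⟩
    set N' : Set Ω := B \ {ω | τ ω ≤ t} with hN'
    have hNsub : N' ⊆ Nset := by
      rintro ω ⟨hωB, hωτ⟩
      obtain ⟨i, hi⟩ := hωB
      exact Set.mem_iUnion.mpr ⟨i, not_le.mp hωτ, hi.symm⟩
    have hN'null : P N' = 0 := measure_mono_null hNsub hNsetnull
    have hN'mem : MeasurableSet[MeasurableSpace.generateFrom {s : Set Ω | P s = 0}] N' :=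
      MeasurableSpace.measurableSet_generateFrom hN'null
    have hEq : {ω | τ ω ≤ t} = B ∩ N'ᶜ := by
      ext ω
      simp only [Set.mem_setOf_eq, Set.mem_inter_iff, Set.mem_compl_iff]
      constructor
      · intro hω
        obtain ⟨i0, hi0⟩ := hZd ω
        refine ⟨⟨i0, by rw [hrbZ ω hω, hi0]⟩, fun hc => hc.2 hω⟩
      · rintro ⟨hωB, hωN⟩
        by_contra hcon
        exact hωN ⟨hωB, hcon⟩
    rw [hEq]
    exact MeasurableSet.inter (MeasurableSpace.le_def.mp le_sup_left B hBmem)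
      ((MeasurableSpace.le_def.mp le_sup_right N' hN'mem).compl)
end

section
/- If the law of the pinning point Z is absolutely continuous with respect to Lebesgue measure, then for any t > 0 with 0 < P(τ > t) < 1 one has E[1_{τ ≤ t} | ζ_t] ≠ 1_{τ ≤ t} with positive probability; hence there exist times t > 0 with {τ ≤ t} ∉ σ(ζ_t) ∨ N_P. -/
open MeasureTheory ProbabilityTheory Real Set Filter

noncomputable def apxQ (n : ℕ) (r : ℝ) : ℚ := (⌈r * 2 ^ n⌉ : ℚ) / 2 ^ n

lemma apxQ_measurable (n : ℕ) : Measurable (apxQ n) := by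
  have h1 : Measurable fun r : ℝ => (⌈r * 2 ^ n⌉ : ℤ) :=
    Int.measurable_ceil.comp (measurable_id.mul_const _)
  exact (measurable_of_countable (fun k : ℤ => ((k : ℚ) / 2 ^ n : ℚ))).comp h1

lemma apxQ_tendsto (r : ℝ) : Tendsto (fun n => ((apxQ n r : ℚ) : ℝ)) atTop (nhds r) := by
  have key : ∀ n : ℕ, r ≤ ((apxQ n r : ℚ) : ℝ) ∧ ((apxQ n r : ℚ) : ℝ) < r + (1/2) ^ n := by
    intro n
    have h2 : (0:ℝ) < 2 ^ n := by positivity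
    have hc : ((apxQ n r : ℚ) : ℝ) = (⌈r * 2 ^ n⌉ : ℝ) / 2 ^ n := by
      simp [apxQ]
    constructor
    · rw [hc, le_div_iff₀ h2]
      exact Int.le_ceil _
    · rw [hc, div_lt_iff₀ h2, add_mul, one_div, inv_pow, inv_mul_cancel₀ h2.ne']
      exact (Int.ceil_lt_add_one _)
  refine tendsto_of_tendsto_of_tendsto_of_le_of_le (tendsto_const_nhds)
    ?_ (fun n => (key n).1) (fun n => ((key n).2).le)
  have : Tendsto (fun n : ℕ => r + (1/2:ℝ) ^ n) atTop (nhds (r + 0)) :=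
    tendsto_const_nhds.add (tendsto_pow_atTop_nhds_zero_of_lt_one (by norm_num) (by norm_num))
  simpa using this

noncomputable def evalF (p : ℝ × (Option ℚ → ℝ)) : ℝ :=
  limsup (fun n => p.2 (some (apxQ n p.1))) atTop

lemma evalF_measurable : Measurable evalF := by
  apply Measurable.limsup
  intro n
  have hg : Measurable fun q : (Option ℚ → ℝ) × ℚ => q.1 (some q.2) :=
    measurable_from_prod_countable_left (fun y => measurable_pi_apply (some y))
  exact hg.comp (measurable_snd.prodMk ((apxQ_measurable n).comp measurable_fst))

lemma evalF_eq {w : ℝ → ℝ} (hw : Continuous w) (r : ℝ) (v : Option ℚ → ℝ)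
    (hv : ∀ q : ℚ, v (some q) = w (q : ℝ)) : evalF (r, v) = w r := by
  have : Tendsto (fun n => v (some (apxQ n r))) atTop (nhds (w r)) := by
    simp only [hv]
    exact (hw.tendsto r).comp (apxQ_tendsto r)
  exact this.limsup_eq

lemma lintegral_pos_of_pos {α : Type*} [MeasurableSpace α] (μ : Measure α)
    [IsProbabilityMeasure μ] {g : α → ENNReal} (hg : Measurable g)
    (hpos : ∀ x, 0 < g x) : 0 < ∫⁻ x, g x ∂μ := by
  rcases eq_or_ne (∫⁻ x, g x ∂μ) 0 with h | h
  · exfalso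
    have h0 : g =ᵐ[μ] 0 := (lintegral_eq_zero_iff hg).1 h
    have : μ {x | ¬ g x = 0} = 0 := ae_iff.1 h0
    have huniv : {x | ¬ g x = 0} = Set.univ := by
      ext x; simp [(hpos x).ne']
    rw [huniv] at this
    simp at this
  · exact pos_iff_ne_zero.2 h

lemma gaussian_pos (m : ℝ) {v : NNReal} (hv : v ≠ 0) {S : Set ℝ}
    (hS : volume S ≠ 0) : 0 < gaussianReal m v S := by
  refine pos_iff_ne_zero.2 fun h => hS ?_
  exact gaussianReal_absolutelyContinuous' m hv h

lemma gaussian_affine_map {v : NNReal} (c C : ℝ) :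
    (gaussianReal 0 v).map (fun y => c * y + C)
      = gaussianReal C (⟨c ^ 2, sq_nonneg c⟩ * v) := by
  have : (fun y : ℝ => c * y + C) = (· + C) ∘ (c * ·) := rfl
  rw [this, ← Measure.map_map ((measurable_add_const C)) (measurable_const_mul c),
    gaussianReal_map_const_mul, gaussianReal_map_add_const]
  simp
  rfl

lemma slice_pos {Ω : Type*} [MeasurableSpace Ω] (P : Measure Ω) [IsProbabilityMeasure P]
    (W : ℝ → Ω → ℝ) (hW0 : ∀ ω, W 0 ω = 0) (hWm : ∀ s, Measurable (W s))
    (hWlaw : ∀ s u : ℝ, 0 ≤ s → s ≤ u →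
      P.map (fun ω => W u ω - W s ω) = gaussianReal 0 (u - s).toNNReal)
    (hWind : ∀ s u u' v : ℝ, 0 ≤ s → s ≤ u → u ≤ u' → u' ≤ v →
      IndepFun (fun ω => W u ω - W s ω) (fun ω => W v ω - W u' ω) P)
    {t r : ℝ} (ht : 0 < t) (htr : t < r) (z : ℝ)
    {S : Set ℝ} (hS : MeasurableSet S) (hSvol : volume S ≠ 0) :
    0 < P {ω | W t ω - (t / r) * W r ω + (t / r) * z ∈ S} := by
  set b : ℝ := t / r with hb
  have hr : (0:ℝ) < r := ht.trans htr
  have hbpos : 0 < b := div_pos ht hr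
  set a : ℝ := 1 - b with ha
  set X : Ω → ℝ := fun ω => W t ω
  set Y : Ω → ℝ := fun ω => W r ω - W t ω with hYdef
  have hXm : Measurable X := hWm t
  have hYm : Measurable Y := (hWm r).sub (hWm t)
  have hX : P.map X = gaussianReal 0 t.toNNReal := by
    have h := hWlaw 0 t le_rfl ht.le
    simpa [hW0] using h
  have hY : P.map Y = gaussianReal 0 (r - t).toNNReal := hWlaw t r ht.le htr.le
  have hIndXY : IndepFun X Y P := by
    have h := hWind 0 t t r le_rfl ht.le le_rfl htr.le
    simpa [hW0] using h
  have hmap : P.map (fun ω => (X ω, Y ω)) = (P.map X).prod (P.map Y) :=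
    (indepFun_iff_map_prod_eq_prod_map_map hXm.aemeasurable hYm.aemeasurable).1 hIndXY
  set T : Set (ℝ × ℝ) := {q | a * q.1 - b * q.2 + b * z ∈ S} with hT
  have hTm : MeasurableSet T := by
    have : Measurable fun q : ℝ × ℝ => a * q.1 - b * q.2 + b * z := by
      apply Measurable.add_const
      exact (measurable_fst.const_mul a).sub (measurable_snd.const_mul b)
    exact this hS
  have hev : {ω | W t ω - (t / r) * W r ω + (t / r) * z ∈ S}
      = (fun ω => (X ω, Y ω)) ⁻¹' T := by
    ext ω
    have hEq : W t ω - (t / r) * W r ω + (t / r) * z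
        = a * (W t ω, W r ω - W t ω).1 - b * (W t ω, W r ω - W t ω).2 + b * z := by
      simp only [ha, hb]; ring
    simp only [Set.mem_setOf_eq, Set.mem_preimage, hT, X, hYdef, hEq]
  rw [hev, ← Measure.map_apply (hXm.prodMk hYm) hTm, hmap, hX, hY,
    Measure.prod_apply hTm]
  have hslice : ∀ x : ℝ, (gaussianReal 0 (r - t).toNNReal) (Prod.mk x ⁻¹' T)
      = gaussianReal (a * x + b * z) (⟨(-b) ^ 2, sq_nonneg _⟩ * (r - t).toNNReal) S := by
    intro x
    have hset : Prod.mk x ⁻¹' T = (fun y => (-b) * y + (a * x + b * z)) ⁻¹' S := by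
      ext y
      have hEq : a * x - b * y + b * z = (-b) * y + (a * x + b * z) := by ring
      simp only [Set.mem_preimage, hT, Set.mem_setOf_eq, hEq]
    rw [hset, ← Measure.map_apply (by fun_prop) hS, gaussian_affine_map]
  have hvar : (⟨(-b) ^ 2, sq_nonneg (-b)⟩ * (r - t).toNNReal : NNReal) ≠ 0 := by
    refine mul_ne_zero ?_ ?_
    · intro h
      have h' : ((-b) ^ 2 : ℝ) = 0 := congrArg Subtype.val h
      exact pow_ne_zero 2 (neg_ne_zero.2 hbpos.ne') h'
    · simp only [ne_eq, Real.toNNReal_eq_zero, not_le]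
      linarith
  refine lintegral_pos_of_pos _ (measurable_measure_prodMk_left hTm) fun x => ?_
  rw [hslice x]
  exact gaussian_pos _ hvar hSvol

def aeApprox {Ω : Type*} [MeasurableSpace Ω] (P : Measure Ω) (m : MeasurableSpace Ω) : MeasurableSpace Ω where
  MeasurableSet' s := ∃ u, MeasurableSet[m] u ∧ P (symmDiff s u) = 0
  measurableSet_empty := ⟨∅, MeasurableSet.empty, by simp⟩
  measurableSet_compl := by
    rintro s ⟨u, hu, h0⟩
    refine ⟨uᶜ, hu.compl, ?_⟩
    rwa [compl_symmDiff_compl]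
  measurableSet_iUnion := by
    intro s hs
    choose u hu h0 using hs
    refine ⟨⋃ i, u i, MeasurableSet.iUnion hu, ?_⟩
    have hsub : symmDiff (⋃ i, s i) (⋃ i, u i) ⊆ ⋃ i, symmDiff (s i) (u i) := by
      intro x hx
      rw [Set.mem_symmDiff] at hx
      rcases hx with ⟨hx1, hx2⟩ | ⟨hx1, hx2⟩
      · obtain ⟨i, hi⟩ := Set.mem_iUnion.1 hx1
        refine Set.mem_iUnion.2 ⟨i, Set.mem_symmDiff.2 (Or.inl ⟨hi, fun hc => ?_⟩)⟩
        exact hx2 (Set.mem_iUnion.2 ⟨i, hc⟩)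
      · obtain ⟨i, hi⟩ := Set.mem_iUnion.1 hx1
        refine Set.mem_iUnion.2 ⟨i, Set.mem_symmDiff.2 (Or.inr ⟨hi, fun hc => ?_⟩)⟩
        exact hx2 (Set.mem_iUnion.2 ⟨i, hc⟩)
    exact measure_mono_null hsub (measure_iUnion_null h0)

lemma aeApprox_elim {Ω : Type*} [m0 : MeasurableSpace Ω] {P : Measure Ω}
    {m : MeasurableSpace Ω} {s : Set Ω}
    (h : MeasurableSet[@aeApprox Ω m0 P m] s) :
    ∃ u, MeasurableSet[m] u ∧ P (symmDiff s u) = 0 := h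

lemma aeApprox_intro {Ω : Type*} [m0 : MeasurableSpace Ω] {P : Measure Ω}
    {m : MeasurableSpace Ω} {s : Set Ω}
    (u : Set Ω) (hu : MeasurableSet[m] u) (h0 : P (symmDiff s u) = 0) :
    MeasurableSet[@aeApprox Ω m0 P m] s := ⟨u, hu, h0⟩

lemma core {Ω : Type*} [MeasurableSpace Ω] (P : Measure Ω) [IsProbabilityMeasure P]
    (W : ℝ → Ω → ℝ) (hW : IsBrownianMotion P W)
    (τ Z : Ω → ℝ) (hτ : Measurable τ) (hZ : Measurable Z) (hτpos : ∀ ω, 0 < τ ω)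
    (hInd : IndepLPW P τ Z W)
    (f : ℝ → ℝ) (hf : Measurable f)
    (hZf : P.map Z = volume.withDensity fun x => ENNReal.ofReal (f x))
    (t : ℝ) (ht : 0 < t) (h1 : 0 < P {ω | t < τ ω}) (h2 : P {ω | t < τ ω} < 1)
    (S : Set ℝ) (hSm : MeasurableSet S)
    (hAS : P ({ω | τ ω ≤ t} \ rbridge W τ Z t ⁻¹' S) = 0)
    (hSA : P (rbridge W τ Z t ⁻¹' S \ {ω | τ ω ≤ t}) = 0) : False := by
  obtain ⟨hW0, hWc, hWm, hWlaw, hWind⟩ := hW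
  obtain ⟨hIndτZ, hIndPW⟩ := hInd
  -- the bridge equals Z on {τ ≤ t}
  have hbr_le : ∀ ω, τ ω ≤ t → rbridge W τ Z t ω = Z ω := by
    intro ω h
    unfold rbridge bridge
    rw [min_eq_right h, div_self (hτpos ω).ne']
    ring
  have hbr_gt : ∀ ω, t < τ ω →
      rbridge W τ Z t ω = W t ω - (t / τ ω) * W (τ ω) ω + (t / τ ω) * Z ω := by
    intro ω h
    unfold rbridge bridge
    rw [min_eq_left h.le]
  -- Step A : S has positive Lebesgue measure
  have hmeas_gt : MeasurableSet {ω | t < τ ω} := hτ measurableSet_Ioi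
  have hcompl : {ω | τ ω ≤ t} = {ω | t < τ ω}ᶜ := by
    ext ω; simp [not_lt]
  have hτle_ne : P {ω | τ ω ≤ t} ≠ 0 := by
    rw [hcompl, measure_compl hmeas_gt (measure_ne_top P _), measure_univ]
    rw [ne_eq, tsub_eq_zero_iff_le, not_le]
    exact h2
  have hZSc : P (τ ⁻¹' (Set.Iic t) ∩ Z ⁻¹' Sᶜ) = 0 := by
    refine measure_mono_null ?_ hAS
    intro ω ⟨h1', h2'⟩
    refine ⟨h1', fun hc => h2' ?_⟩
    rw [Set.mem_preimage, hbr_le ω h1'] at hc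
    exact hc
  have hprod := hIndτZ.measure_inter_preimage_eq_mul _ _ (measurableSet_Iic (a := t)) hSm.compl
  rw [hZSc] at hprod
  have hτeq : τ ⁻¹' (Set.Iic t) = {ω | τ ω ≤ t} := rfl
  have hZc0 : P (Z ⁻¹' Sᶜ) = 0 := by
    rcases mul_eq_zero.1 hprod.symm with h | h
    · rw [hτeq] at h; exact absurd h hτle_ne
    · exact h
  have hmapZS : (P.map Z) S = 1 := by
    have htot := measure_add_measure_compl (μ := P.map Z) hSm
    rw [Measure.map_apply hZ hSm.compl, hZc0, add_zero] at htot
    haveI : IsProbabilityMeasure (P.map Z) := Measure.isProbabilityMeasure_map hZ.aemeasurable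
    rw [htot, measure_univ]
  have hSvol : volume S ≠ 0 := by
    intro h0
    have := withDensity_absolutelyContinuous (μ := volume)
      (f := fun x => ENNReal.ofReal (f x)) h0
    rw [← hZf, hmapZS] at this
    exact one_ne_zero this
  -- Step B : positivity of P({t < τ} ∩ rbridge⁻¹ S), contradiction with hSA
  set Φ : Ω → (Option ℚ → ℝ) := fun ω i => W (Option.elim i t fun q => (q : ℝ)) ω with hΦ
  have hΦm : Measurable Φ := measurable_pi_lambda _ fun i => hWm _
  set J : Ω → (ℝ × ℝ) × (Option ℚ → ℝ) := fun ω => ((τ ω, Z ω), Φ ω) with hJ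
  have hpm : Measurable fun ω => (τ ω, Z ω) := hτ.prodMk hZ
  have hJm : Measurable J := hpm.prodMk hΦm
  set G : (ℝ × ℝ) × (Option ℚ → ℝ) → ℝ :=
    fun p => p.2 none - (t / p.1.1) * evalF (p.1.1, p.2) + (t / p.1.1) * p.1.2 with hG
  have hGm : Measurable G := by
    have m1 : Measurable fun p : (ℝ × ℝ) × (Option ℚ → ℝ) => p.2 none :=
      (measurable_pi_apply none).comp measurable_snd
    have m2 : Measurable fun p : (ℝ × ℝ) × (Option ℚ → ℝ) => t / p.1.1 :=
      measurable_const.div (measurable_fst.comp measurable_fst)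
    have m3 : Measurable fun p : (ℝ × ℝ) × (Option ℚ → ℝ) => evalF (p.1.1, p.2) :=
      evalF_measurable.comp ((measurable_fst.comp measurable_fst).prodMk measurable_snd)
    exact (m1.sub (m2.mul m3)).add (m2.mul (measurable_snd.comp measurable_fst))
  set E : Set ((ℝ × ℝ) × (Option ℚ → ℝ)) := {p | t < p.1.1 ∧ G p ∈ S} with hE
  have hEm : MeasurableSet E := by
    have h1' : MeasurableSet {p : (ℝ × ℝ) × (Option ℚ → ℝ) | t < p.1.1} :=
      measurableSet_lt measurable_const (measurable_fst.comp measurable_fst)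
    exact h1'.inter (hGm hSm)
  have hF : ∀ (r : ℝ) (ω : Ω), evalF (r, Φ ω) = W r ω := fun r ω =>
    evalF_eq (hWc ω) r (Φ ω) fun q => rfl
  have hmem : ∀ ω, J ω ∈ E ↔ t < τ ω ∧ rbridge W τ Z t ω ∈ S := by
    intro ω
    simp only [hE, Set.mem_setOf_eq, hJ]
    refine and_congr_right fun hlt => ?_
    have hGr : G ((τ ω, Z ω), Φ ω) = rbridge W τ Z t ω := by
      rw [hG, hbr_gt ω hlt]
      simp only [hF (τ ω) ω]
      rfl
    rw [hGr]
  have hJE : J ⁻¹' E = {ω | t < τ ω} ∩ rbridge W τ Z t ⁻¹' S := by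
    ext ω
    simpa using hmem ω
  have hPair : IndepFun (fun ω => (τ ω, Z ω)) Φ P := by
    have hψ : Measurable fun w : ℝ → ℝ =>
        (fun i : Option ℚ => w (Option.elim i t fun q => (q : ℝ))) :=
      measurable_pi_lambda _ fun i => measurable_pi_apply _
    exact hIndPW.comp measurable_id hψ
  have hmapJ : P.map J = (P.map fun ω => (τ ω, Z ω)).prod (P.map Φ) :=
    (indepFun_iff_map_prod_eq_prod_map_map hpm.aemeasurable hΦm.aemeasurable).1 hPair
  haveI : IsProbabilityMeasure (P.map Φ) := Measure.isProbabilityMeasure_map hΦm.aemeasurable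
  haveI : IsProbabilityMeasure (P.map fun ω => (τ ω, Z ω)) :=
    Measure.isProbabilityMeasure_map hpm.aemeasurable
  set ν : Measure (ℝ × ℝ) := P.map fun ω => (τ ω, Z ω) with hν
  set μΦ : Measure (Option ℚ → ℝ) := P.map Φ with hμΦ
  have key : P ({ω | t < τ ω} ∩ rbridge W τ Z t ⁻¹' S)
      = ∫⁻ pz, μΦ (Prod.mk pz ⁻¹' E) ∂ν := by
    rw [← hJE, ← Measure.map_apply hJm hEm, hmapJ, Measure.prod_apply hEm]
  have hzero : P ({ω | t < τ ω} ∩ rbridge W τ Z t ⁻¹' S) = 0 := by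
    refine measure_mono_null ?_ hSA
    intro ω ⟨ha, hb⟩
    exact ⟨hb, by simpa [not_le] using ha⟩
  have hslice_pos : ∀ pz : ℝ × ℝ, t < pz.1 → 0 < μΦ (Prod.mk pz ⁻¹' E) := by
    rintro ⟨r, z⟩ hlt
    have hsl : MeasurableSet (Prod.mk (r, z) ⁻¹' E) := measurable_prodMk_left hEm
    have hsleq : Φ ⁻¹' (Prod.mk (r, z) ⁻¹' E)
        = {ω | W t ω - (t / r) * W r ω + (t / r) * z ∈ S} := by
      ext ω
      simp only [Set.mem_preimage, hE, Set.mem_setOf_eq, hG, hlt, true_and]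
      have h1' : Φ ω none = W t ω := rfl
      have h2' : evalF (r, Φ ω) = W r ω := hF r ω
      rw [h1', h2']
    rw [hμΦ, Measure.map_apply hΦm hsl, hsleq]
    exact slice_pos P W hW0 hWm hWlaw hWind ht hlt z hSm hSvol
  have hνgt : ν {pz : ℝ × ℝ | t < pz.1} = P {ω | t < τ ω} := by
    rw [hν, Measure.map_apply hpm (measurableSet_lt measurable_const measurable_fst)]
    rfl
  rw [hzero] at key
  have hae : (fun pz => μΦ (Prod.mk pz ⁻¹' E)) =ᵐ[ν] 0 :=
    (lintegral_eq_zero_iff (measurable_measure_prodMk_left hEm)).1 key.symm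
  have hsub : {pz : ℝ × ℝ | t < pz.1} ⊆ {pz | ¬ μΦ (Prod.mk pz ⁻¹' E) = 0} :=
    fun pz hpz => (hslice_pos pz hpz).ne'
  have : ν {pz : ℝ × ℝ | t < pz.1} = 0 :=
    measure_mono_null hsub (ae_iff.1 hae)
  rw [hνgt] at this
  exact absurd this h1.ne'

theorem stmt10 {Ω : Type*} [MeasurableSpace Ω] (P : Measure Ω) [IsProbabilityMeasure P]
    (W : ℝ → Ω → ℝ) (hW : IsBrownianMotion P W)
    (τ Z : Ω → ℝ) (hτ : Measurable τ) (hZ : Measurable Z) (hτpos : ∀ ω, 0 < τ ω)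
    (hInd : IndepLPW P τ Z W)
    (f : ℝ → ℝ) (hf : Measurable f)
    (hZf : P.map Z = volume.withDensity fun x => ENNReal.ofReal (f x)) :
    ∀ t : ℝ, 0 < t → 0 < P {ω | t < τ ω} → P {ω | t < τ ω} < 1 →
      ¬ (P[(fun ω => if τ ω ≤ t then (1 : ℝ) else 0) |
            MeasurableSpace.comap (rbridge W τ Z t) Real.measurableSpace]
          =ᵐ[P] fun ω => if τ ω ≤ t then (1 : ℝ) else 0) ∧
      ¬ MeasurableSet[MeasurableSpace.comap (rbridge W τ Z t) Real.measurableSpace ⊔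
            MeasurableSpace.generateFrom {s : Set Ω | P s = 0}]
          {ω | τ ω ≤ t} := by
  intro t ht h1 h2
  have hζ : rbridge W τ Z t = rbridge W τ Z t := rfl
  constructor
  · intro hcond
    set g := P[(fun ω => if τ ω ≤ t then (1 : ℝ) else 0) |
        MeasurableSpace.comap (rbridge W τ Z t) Real.measurableSpace] with hg
    have hgm : Measurable[MeasurableSpace.comap (rbridge W τ Z t) Real.measurableSpace] g :=
      stronglyMeasurable_condExp.measurable
    have hS0 : MeasurableSet[MeasurableSpace.comap (rbridge W τ Z t) Real.measurableSpace]
        (g ⁻¹' (Set.Ici (1/2 : ℝ))) := hgm measurableSet_Ici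
    rw [MeasurableSpace.measurableSet_comap] at hS0
    obtain ⟨S, hSm, hpre⟩ := hS0
    have hne : P {ω | ¬ g ω = (if τ ω ≤ t then (1 : ℝ) else 0)} = 0 := ae_iff.1 hcond
    refine core P W hW τ Z hτ hZ hτpos hInd f hf hZf t ht h1 h2 S hSm ?_ ?_
    · refine measure_mono_null ?_ hne
      rintro ω ⟨hωA, hωS⟩
      have hA' : τ ω ≤ t := hωA
      intro heq
      apply hωS
      show ω ∈ rbridge W τ Z t ⁻¹' S
      rw [hpre]
      have : g ω = 1 := by rw [heq, if_pos hA']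
      simp only [Set.mem_preimage, Set.mem_Ici, this]
      norm_num
    · refine measure_mono_null ?_ hne
      rintro ω ⟨hωS, hωA⟩
      have hA' : ¬ τ ω ≤ t := hωA
      intro heq
      rw [if_neg hA'] at heq
      have : ω ∈ g ⁻¹' (Set.Ici (1/2 : ℝ)) := by rw [← hpre]; exact hωS
      simp only [Set.mem_preimage, Set.mem_Ici, heq] at this
      norm_num at this
  · intro hmeas
    have hle : (MeasurableSpace.comap (rbridge W τ Z t) Real.measurableSpace ⊔
        MeasurableSpace.generateFrom {s : Set Ω | P s = 0}) ≤
        aeApprox P (MeasurableSpace.comap (rbridge W τ Z t) Real.measurableSpace) := by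
      refine sup_le ?_ ?_
      · intro s hs
        exact aeApprox_intro s hs (by rw [symmDiff_self]; simp)
      · refine MeasurableSpace.generateFrom_le fun s hs => ?_
        refine aeApprox_intro ∅ (@MeasurableSet.empty _
          (MeasurableSpace.comap (rbridge W τ Z t) Real.measurableSpace)) ?_
        simpa using hs
    obtain ⟨u, hu, h0⟩ := aeApprox_elim (hle _ hmeas)
    rw [MeasurableSpace.measurableSet_comap] at hu
    obtain ⟨S, hSm, hpre⟩ := hu
    refine core P W hW τ Z hτ hZ hτpos hInd f hf hZf t ht h1 h2 S hSm ?_ ?_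
    · refine measure_mono_null ?_ h0
      rw [hpre]
      intro x ⟨hx1, hx2⟩
      exact Set.mem_symmDiff.2 (Or.inl ⟨hx1, hx2⟩)
    · refine measure_mono_null ?_ h0
      rw [hpre]
      intro x ⟨hx1, hx2⟩
      exact Set.mem_symmDiff.2 (Or.inr ⟨hx1, hx2⟩)
end

section
/- If Z is discrete with P(Z = z_i) = p_i, then for every t > 0, the conditional law of ζ_t given (τ, Z) = (r, z) has density q_t(x, r, z) = Σ_{i≥1} 1_{x = z_i} 1_{z = z_i} 1_{r ≤ t} + φ_{ζ^{r,z}_t}(x) ∏_{i≥1} 1_{x ≠ z_i} 1_{t < r} with respect to the σ-finite measure μ(dx) = dx + Σ_{i≥1} δ_{z_i}(dx). -/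
open MeasureTheory ProbabilityTheory Real Set
open Filter

lemma pdf_conv (v₁ v₂ : NNReal) (h₁ : (v₁:ℝ) ≠ 0) (h₂ : (v₂:ℝ) ≠ 0) (u x : ℝ) :
    gaussianPDFReal 0 v₁ x * gaussianPDFReal x v₂ u
      = gaussianPDFReal 0 (v₁+v₂) u * gaussianPDFReal ((v₁:ℝ)*u/((v₁:ℝ)+v₂)) (v₁*v₂/(v₁+v₂)) x := by
  have h1 : (0:ℝ) < v₁ := lt_of_le_of_ne v₁.2 (Ne.symm h₁)
  have h2 : (0:ℝ) < v₂ := lt_of_le_of_ne v₂.2 (Ne.symm h₂)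
  have h12 : (0:ℝ) < (v₁:ℝ) + v₂ := by linarith
  have hc : ((v₁*v₂/(v₁+v₂) : NNReal) : ℝ) = (v₁:ℝ)*v₂/((v₁:ℝ)+v₂) := by push_cast; ring
  simp only [gaussianPDFReal_def, NNReal.coe_add, hc]
  have hpi := Real.pi_pos
  conv_lhs => rw [mul_mul_mul_comm, ← Real.exp_add, ← mul_inv, ← Real.sqrt_mul (by positivity)]
  conv_rhs => rw [mul_mul_mul_comm, ← Real.exp_add, ← mul_inv, ← Real.sqrt_mul (by positivity)]
  congr 2
  · field_simp
  · field_simp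
    ring

lemma gaussianPDF_cont (v : NNReal) : Continuous (fun p : ℝ × ℝ => gaussianPDFReal p.1 v p.2) := by
  simp only [gaussianPDFReal_def]
  fun_prop

lemma gaussianReal_conv (v₁ v₂ : NNReal) (h₁ : v₁ ≠ 0) (h₂ : v₂ ≠ 0) :
    ((gaussianReal 0 v₁).prod (gaussianReal 0 v₂)).map (fun p : ℝ × ℝ => p.1 + p.2)
      = gaussianReal 0 (v₁ + v₂) := by
  have h12 : v₁ + v₂ ≠ 0 := by positivity
  have h1R : (v₁:ℝ) ≠ 0 := by exact_mod_cast h₁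
  have h2R : (v₂:ℝ) ≠ 0 := by exact_mod_cast h₂
  have hv' : v₁ * v₂ / (v₁ + v₂) ≠ 0 := by
    simp [div_eq_zero_iff, mul_eq_zero, h₁, h₂, h12]
  ext s hs
  rw [Measure.map_apply measurable_add hs, Measure.prod_apply (measurable_add hs)]
  have hstep : ∀ x : ℝ, (gaussianReal 0 v₂) (Prod.mk x ⁻¹' ((fun p : ℝ × ℝ => p.1 + p.2) ⁻¹' s))
      = ∫⁻ u in s, gaussianPDF x v₂ u := by
    intro x
    have : Prod.mk x ⁻¹' ((fun p : ℝ × ℝ => p.1 + p.2) ⁻¹' s) = (fun y => y + x) ⁻¹' s := by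
      ext y; simp [add_comm]
    rw [this, ← Measure.map_apply (measurable_add_const x) hs, gaussianReal_map_add_const,
      zero_add, gaussianReal_apply x h₂ s]
  simp_rw [hstep]
  rw [gaussianReal_of_var_ne_zero 0 h₁]
  have hm2 : Measurable fun p : ℝ × ℝ => gaussianPDF p.1 v₂ p.2 := by
    exact ENNReal.measurable_ofReal.comp (gaussianPDF_cont v₂).measurable
  rw [lintegral_withDensity_eq_lintegral_mul _ (measurable_gaussianPDF 0 v₁)
    (Measurable.lintegral_prod_right (f := fun x u => gaussianPDF x v₂ u) hm2)]
  simp only [Pi.mul_apply]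
  have : ∀ x : ℝ, gaussianPDF 0 v₁ x * ∫⁻ u in s, gaussianPDF x v₂ u
      = ∫⁻ u in s, gaussianPDF 0 v₁ x * gaussianPDF x v₂ u := fun x =>
    (lintegral_const_mul _ (measurable_gaussianPDF x v₂)).symm
  simp_rw [this]
  rw [lintegral_lintegral_swap]
  · rw [gaussianReal_apply 0 h12 s]
    refine setLIntegral_congr_fun hs (fun u _ => ?_)
    have key : ∀ x : ℝ, gaussianPDF 0 v₁ x * gaussianPDF x v₂ u
        = gaussianPDF 0 (v₁+v₂) u * gaussianPDF ((v₁:ℝ)*u/((v₁:ℝ)+v₂)) (v₁*v₂/(v₁+v₂)) x := by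
      intro x
      simp only [gaussianPDF_def]
      rw [← ENNReal.ofReal_mul (gaussianPDFReal_nonneg _ _ _),
        ← ENNReal.ofReal_mul (gaussianPDFReal_nonneg _ _ _), pdf_conv v₁ v₂ h1R h2R u x]
    simp_rw [key]
    rw [lintegral_const_mul _ (measurable_gaussianPDF _ _), lintegral_gaussianPDF_eq_one _ hv',
      mul_one]
  · exact (((measurable_gaussianPDF 0 v₁).comp measurable_fst).mul hm2).aemeasurable

lemma indep_gauss_add {Ω : Type*} [MeasurableSpace Ω] (P : Measure Ω) [IsProbabilityMeasure P]
    {X Y : Ω → ℝ} (hX : Measurable X) (hY : Measurable Y) (h : IndepFun X Y P)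
    (v₁ v₂ : NNReal) (h₁ : v₁ ≠ 0) (h₂ : v₂ ≠ 0)
    (hx : P.map X = gaussianReal 0 v₁) (hy : P.map Y = gaussianReal 0 v₂) :
    P.map (fun ω => X ω + Y ω) = gaussianReal 0 (v₁ + v₂) := by
  have hj := (indepFun_iff_map_prod_eq_prod_map_map hX.aemeasurable hY.aemeasurable).mp h
  have hc : P.map (fun ω => X ω + Y ω)
      = (P.map fun ω => (X ω, Y ω)).map (fun p : ℝ × ℝ => p.1 + p.2) :=
    (Measure.map_map measurable_add (hX.prodMk hY)).symm
  rw [hc, hj, hx, hy, gaussianReal_conv _ _ h₁ h₂]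

lemma bridge_law_lt {Ω : Type*} [MeasurableSpace Ω] (P : Measure Ω) [IsProbabilityMeasure P]
    (W : ℝ → Ω → ℝ) (hW : IsBrownianMotion P W) (t r z : ℝ) (ht : 0 < t) (htr : t < r) :
    P.map (bridge W r z t) = gaussianReal ((t/r)*z) ((t*(r-t)/r).toNNReal) := by
  obtain ⟨hW0, hWc, hWm, hWlaw, hWind⟩ := hW
  have hr : 0 < r := ht.trans htr
  set c₁ : ℝ := 1 - t/r with hc₁
  set c₂ : ℝ := -(t/r) with hc₂
  have hc₁0 : c₁ ≠ 0 := by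
    have : t/r < 1 := (div_lt_one hr).mpr htr
    simp [hc₁]; linarith
  have hc₂0 : c₂ ≠ 0 := by
    rw [hc₂, neg_ne_zero]
    exact (div_pos ht hr).ne'
  have hA : Measurable (fun ω => W t ω - W 0 ω) := (hWm t).sub (hWm 0)
  have hB : Measurable (fun ω => W r ω - W t ω) := (hWm r).sub (hWm t)
  have hAB : IndepFun (fun ω => c₁ * (W t ω - W 0 ω)) (fun ω => c₂ * (W r ω - W t ω)) P := by
    exact (hWind 0 t t r le_rfl ht.le le_rfl htr.le).comp
      (measurable_const_mul c₁) (measurable_const_mul c₂)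
  have hXlaw : P.map (fun ω => c₁ * (W t ω - W 0 ω))
      = gaussianReal 0 (NNReal.mk (c₁^2) (sq_nonneg c₁) * (t-0).toNNReal) := by
    have := hWlaw 0 t le_rfl ht.le
    rw [show (fun ω => c₁ * (W t ω - W 0 ω)) = (fun x => c₁ * x) ∘ (fun ω => W t ω - W 0 ω) from rfl,
      ← Measure.map_map (measurable_const_mul c₁) hA, this, gaussianReal_map_const_mul, mul_zero]
  have hYlaw : P.map (fun ω => c₂ * (W r ω - W t ω))
      = gaussianReal 0 (NNReal.mk (c₂^2) (sq_nonneg c₂) * (r-t).toNNReal) := by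
    have := hWlaw t r ht.le htr.le
    rw [show (fun ω => c₂ * (W r ω - W t ω)) = (fun x => c₂ * x) ∘ (fun ω => W r ω - W t ω) from rfl,
      ← Measure.map_map (measurable_const_mul c₂) hB, this, gaussianReal_map_const_mul, mul_zero]
  have hv₁ : (NNReal.mk (c₁^2) (sq_nonneg c₁) * (t-0).toNNReal : NNReal) ≠ 0 := by
    rw [sub_zero]
    simp only [ne_eq, mul_eq_zero, not_or]
    constructor
    · simp only [← NNReal.coe_ne_zero]; exact pow_ne_zero 2 hc₁0
    · simp [Real.toNNReal_eq_zero, not_le, ht]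
  have hv₂ : (NNReal.mk (c₂^2) (sq_nonneg c₂) * (r-t).toNNReal : NNReal) ≠ 0 := by
    simp only [ne_eq, mul_eq_zero, not_or]
    constructor
    · simp only [← NNReal.coe_ne_zero]; exact pow_ne_zero 2 hc₂0
    · simp [Real.toNNReal_eq_zero, not_le, sub_pos, htr]
  have hsum := indep_gauss_add P ((measurable_const_mul c₁).comp hA)
    ((measurable_const_mul c₂).comp hB) hAB _ _ hv₁ hv₂ hXlaw hYlaw
  have hvar : (NNReal.mk (c₁^2) (sq_nonneg c₁) * (t-0).toNNReal + NNReal.mk (c₂^2) (sq_nonneg c₂) * (r-t).toNNReal : NNReal)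
      = (t*(r-t)/r).toNNReal := by
    apply NNReal.coe_injective
    push_cast
    rw [Real.coe_toNNReal _ (by linarith), Real.coe_toNNReal _ (by linarith),
      Real.coe_toNNReal _ (div_nonneg (by nlinarith) hr.le)]
    field_simp [hc₁, hc₂]
    rw [hc₁, hc₂]; field_simp; ring
  have hbr : bridge W r z t = fun ω =>
      (c₁ * (W t ω - W 0 ω) + c₂ * (W r ω - W t ω)) + (t/r)*z := by
    funext ω
    simp only [bridge, min_eq_left htr.le, hW0 ω, hc₁, hc₂]
    field_simp
    ring
  have hsum' : Measure.map (fun ω => c₁ * (W t ω - W 0 ω) + c₂ * (W r ω - W t ω)) P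
      = gaussianReal 0 (NNReal.mk (c₁^2) (sq_nonneg c₁) * (t-0).toNNReal + NNReal.mk (c₂^2) (sq_nonneg c₂) * (r-t).toNNReal) := hsum
  have hmm := Measure.map_map (μ := P) (g := fun x => x + (t/r)*z)
    (f := fun ω => c₁ * (W t ω - W 0 ω) + c₂ * (W r ω - W t ω)) (measurable_add_const _)
    (((measurable_const_mul c₁).comp hA).add ((measurable_const_mul c₂).comp hB))
  rw [hbr, show (fun ω => (c₁ * (W t ω - W 0 ω) + c₂ * (W r ω - W t ω)) + (t/r)*z)
      = (fun x => x + (t/r)*z) ∘ (fun ω => c₁ * (W t ω - W 0 ω) + c₂ * (W r ω - W t ω)) from rfl,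
    ← hmm, hsum', gaussianReal_map_add_const, zero_add, hvar]

lemma bridge_law_le {Ω : Type*} [MeasurableSpace Ω] (P : Measure Ω) [IsProbabilityMeasure P]
    (W : ℝ → Ω → ℝ) (t r z : ℝ) (hr : 0 < r) (hrt : r ≤ t) :
    P.map (bridge W r z t) = Measure.dirac z := by
  have hbr : bridge W r z t = fun _ => z := by
    funext ω
    simp [bridge, min_eq_right hrt, div_self hr.ne']
  rw [hbr, Measure.map_const]
  simp


noncomputable def qapp (n : ℕ) (a : ℝ) : ℚ := (⌈a * 2^n⌉ : ℤ) / 2^n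

lemma measurable_qapp (n : ℕ) : Measurable (qapp n) := by
  have : qapp n = (fun k : ℤ => ((k:ℚ) / 2^n)) ∘ (fun a : ℝ => ⌈a * 2^n⌉) := rfl
  rw [this]
  exact measurable_from_top.comp (Int.measurable_ceil.comp (measurable_mul_const _))

lemma tendsto_qapp (a : ℝ) : Filter.Tendsto (fun n => ((qapp n a : ℚ) : ℝ)) atTop (nhds a) := by
  have hb : ∀ n : ℕ, a ≤ ((qapp n a : ℚ) : ℝ) ∧ ((qapp n a : ℚ) : ℝ) ≤ a + (1/2)^n := by
    intro n
    have h2 : (0:ℝ) < 2^n := by positivity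
    have hc : ((qapp n a : ℚ) : ℝ) = (⌈a * 2^n⌉ : ℝ) / 2^n := by
      simp [qapp]
    constructor
    · rw [hc, le_div_iff₀ h2]
      exact Int.le_ceil _
    · rw [hc, div_le_iff₀ h2]
      have := (Int.ceil_lt_add_one (a * 2^n)).le
      calc (⌈a * 2^n⌉ : ℝ) ≤ a * 2^n + 1 := this
        _ = (a + (1/2)^n) * 2^n := by rw [add_mul]; congr 1; rw [← mul_pow]; norm_num
  have h1 : Filter.Tendsto (fun n : ℕ => a + (1/2:ℝ)^n) atTop (nhds a) := by
    have := tendsto_pow_atTop_nhds_zero_of_lt_one (by norm_num : (0:ℝ) ≤ 1/2) (by norm_num)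
    simpa using (tendsto_const_nhds (x := a) (f := Filter.atTop)).add this
  exact tendsto_of_tendsto_of_tendsto_of_le_of_le tendsto_const_nhds h1
    (fun n => (hb n).1) (fun n => (hb n).2)

noncomputable def fnB (t : ℝ) (n : ℕ) (p : ℝ × ℝ) (y : ℚ → ℝ) : ℝ :=
  y (qapp n (min t p.1)) - (min t p.1 / p.1) * y (qapp n p.1) + (min t p.1 / p.1) * p.2

noncomputable def FF (t : ℝ) (p : ℝ × ℝ) (y : ℚ → ℝ) : ℝ :=
  (Filter.limsup (fun n => ((fnB t n p y : ℝ) : EReal)) Filter.atTop).toReal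

lemma measurable_eval_rat : Measurable (fun c : (ℚ → ℝ) × ℚ => c.1 c.2) := by
  apply measurable_from_prod_countable_left (f := fun c : (ℚ → ℝ) × ℚ => c.1 c.2)
  exact fun q => measurable_pi_apply q

lemma measurable_fnB (t : ℝ) (n : ℕ) :
    Measurable (fun c : (ℝ × ℝ) × (ℚ → ℝ) => fnB t n c.1 c.2) := by
  have mq1 : Measurable (fun c : (ℝ × ℝ) × (ℚ → ℝ) => qapp n (min t c.1.1)) :=
    (measurable_qapp n).comp (by fun_prop)
  have mq2 : Measurable (fun c : (ℝ × ℝ) × (ℚ → ℝ) => qapp n c.1.1) :=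
    (measurable_qapp n).comp (by fun_prop)
  have h1 : Measurable (fun c : (ℝ × ℝ) × (ℚ → ℝ) => c.2 (qapp n (min t c.1.1))) :=
    measurable_eval_rat.comp (measurable_snd.prodMk mq1)
  have h2 : Measurable (fun c : (ℝ × ℝ) × (ℚ → ℝ) => c.2 (qapp n c.1.1)) :=
    measurable_eval_rat.comp (measurable_snd.prodMk mq2)
  have hdiv : Measurable (fun c : (ℝ × ℝ) × (ℚ → ℝ) => min t c.1.1 / c.1.1) := by fun_prop
  have hlast : Measurable (fun c : (ℝ × ℝ) × (ℚ → ℝ) => c.1.2) := by fun_prop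
  exact (h1.sub (hdiv.mul h2)).add (hdiv.mul hlast)

lemma FF_meas (t : ℝ) : Measurable (fun c : (ℝ × ℝ) × (ℚ → ℝ) => FF t c.1 c.2) := by
  exact measurable_ereal_toReal.comp (Measurable.limsup fun n =>
    measurable_coe_real_ereal.comp (measurable_fnB t n))

lemma FF_meas_comp {α : Type*} [MeasurableSpace α] {t : ℝ} {g : α → ℝ × ℝ}
    {h : α → ℚ → ℝ} (hg : Measurable g) (hh : Measurable h) :
    Measurable (fun a => FF t (g a) (h a)) := by
  have h1 : Measurable ((fun c : (ℝ × ℝ) × (ℚ → ℝ) => FF t c.1 c.2) ∘ (fun a => (g a, h a))) :=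
    (FF_meas t).comp (hg.prodMk hh)
  exact h1

lemma FF_eq_bridge {Ω : Type*} (W : ℝ → Ω → ℝ) (hWc : ∀ ω, Continuous fun s => W s ω)
    (t : ℝ) (p : ℝ × ℝ) (ω : Ω) :
    FF t p (fun q => W q ω) =
      W (min t p.1) ω - (min t p.1 / p.1) * W p.1 ω + (min t p.1 / p.1) * p.2 := by
  have hlim : Filter.Tendsto (fun n => fnB t n p (fun q => W q ω)) atTop
      (nhds (W (min t p.1) ω - (min t p.1 / p.1) * W p.1 ω + (min t p.1 / p.1) * p.2)) := by
    unfold fnB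
    exact ((((hWc ω).tendsto _).comp (tendsto_qapp (min t p.1))).sub
      ((((hWc ω).tendsto _).comp (tendsto_qapp p.1)).const_mul _)).add tendsto_const_nhds
  unfold FF
  have h2 : Filter.Tendsto (fun n => ((fnB t n p fun q => W q ω : ℝ) : EReal)) atTop
      (nhds ((W (min t p.1) ω - (min t p.1 / p.1) * W p.1 ω + (min t p.1 / p.1) * p.2 : ℝ) : EReal)) :=
    (continuous_coe_real_ereal.tendsto _).comp hlim
  rw [h2.limsup_eq]
  rfl


noncomputable def mu0 (zs : ℕ → ℝ) : Measure ℝ :=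
  volume + Measure.sum fun i => Measure.dirac (zs i)

open scoped Classical in
noncomputable def dd (t : ℝ) (zs : ℕ → ℝ) (p : ℝ × ℝ) (x : ℝ) : ENNReal :=
  ENNReal.ofReal (
    (∑' i, if x = zs i ∧ p.2 = zs i ∧ p.1 ≤ t then (1 : ℝ) else 0) +
    gaussD (t * (p.1 - t) / p.1) x ((t / p.1) * p.2) *
      (if (∀ i, x ≠ zs i) ∧ t < p.1 then 1 else 0))

open scoped Classical in
lemma tsum_simp {zs : ℕ → ℝ} (hinj : Function.Injective zs) (t : ℝ) (p : ℝ × ℝ) (x : ℝ) :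
    (∑' i, if x = zs i ∧ p.2 = zs i ∧ p.1 ≤ t then (1 : ℝ) else 0)
      = if x = p.2 ∧ (∃ i, x = zs i) ∧ p.1 ≤ t then 1 else 0 := by
  by_cases h : ∃ i, x = zs i ∧ p.2 = zs i ∧ p.1 ≤ t
  · obtain ⟨i, hx, hp, hle⟩ := h
    rw [tsum_eq_single i, if_pos ⟨hx, hp, hle⟩, if_pos ⟨hx.trans hp.symm, ⟨i, hx⟩, hle⟩]
    intro j hj
    rw [if_neg]
    rintro ⟨hxj, -, -⟩
    exact hj (hinj (hxj.symm.trans hx))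
  · push_neg at h
    have h0 : ∀ i, (if x = zs i ∧ p.2 = zs i ∧ p.1 ≤ t then (1:ℝ) else 0) = 0 := by
      intro i
      rw [if_neg]
      rintro ⟨hx, hp, hle⟩
      exact absurd hle (not_le.mpr (h i hx hp))
    simp only [h0, tsum_zero]
    rw [if_neg]
    rintro ⟨hxp, ⟨i, hxi⟩, hle⟩
    exact absurd hle (not_le.mpr (h i hxi (hxp ▸ hxi)))

open scoped Classical in
lemma dd_eq {zs : ℕ → ℝ} (hinj : Function.Injective zs) (t : ℝ) :
    dd t zs = fun (p : ℝ × ℝ) (x : ℝ) =>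
      ENNReal.ofReal (
        (if x = p.2 ∧ (∃ i, x = zs i) ∧ p.1 ≤ t then (1:ℝ) else 0) +
        gaussD (t * (p.1 - t) / p.1) x ((t / p.1) * p.2) *
          (if (∀ i, x ≠ zs i) ∧ t < p.1 then 1 else 0)) := by
  funext p x
  rw [dd, tsum_simp hinj]

open scoped Classical in
lemma dd_eq' {zs : ℕ → ℝ} (hinj : Function.Injective zs) (t : ℝ) (p : ℝ × ℝ) (x : ℝ) :
    dd t zs p x =
      ENNReal.ofReal (
        (if x = p.2 ∧ (∃ i, x = zs i) ∧ p.1 ≤ t then (1:ℝ) else 0) +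
        gaussD (t * (p.1 - t) / p.1) x ((t / p.1) * p.2) *
          (if (∀ i, x ≠ zs i) ∧ t < p.1 then 1 else 0)) := by
  rw [dd_eq hinj]

lemma measurable_gaussD_part (t : ℝ) :
    Measurable (fun c : (ℝ × ℝ) × ℝ =>
      gaussD (t * (c.1.1 - t) / c.1.1) c.2 ((t / c.1.1) * c.1.2)) := by
  simp only [gaussD]
  have h1 : Measurable (fun c : (ℝ × ℝ) × ℝ => (Real.sqrt (2 * Real.pi * (t * (c.1.1 - t) / c.1.1)))⁻¹) :=
    (Real.continuous_sqrt.measurable.comp (by fun_prop)).inv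
  have h2 : Measurable (fun c : (ℝ × ℝ) × ℝ =>
      Real.exp (-((c.2 - (t / c.1.1) * c.1.2) ^ 2) / (2 * (t * (c.1.1 - t) / c.1.1)))) :=
    Real.continuous_exp.measurable.comp (by fun_prop)
  exact h1.mul h2

open scoped Classical in
lemma measurable_dd {zs : ℕ → ℝ} (hinj : Function.Injective zs) (t : ℝ) :
    Measurable (fun c : (ℝ × ℝ) × ℝ => dd t zs c.1 c.2) := by
  rw [dd_eq hinj]
  apply ENNReal.measurable_ofReal.comp
  apply Measurable.add
  · apply Measurable.ite _ measurable_const measurable_const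
    have hs1 : MeasurableSet {c : (ℝ × ℝ) × ℝ | c.2 = c.1.2} :=
      measurableSet_eq_fun measurable_snd (by fun_prop)
    have hs2 : MeasurableSet {c : (ℝ × ℝ) × ℝ | ∃ i, c.2 = zs i} := by
      have : {c : (ℝ × ℝ) × ℝ | ∃ i, c.2 = zs i} = Prod.snd ⁻¹' (Set.range zs) := by
        ext c; simp [Set.range, eq_comm]
      rw [this]
      exact measurable_snd ((countable_range zs).measurableSet)
    have hs3 : MeasurableSet {c : (ℝ × ℝ) × ℝ | c.1.1 ≤ t} :=
      measurableSet_le (by fun_prop) measurable_const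
    exact (hs1.inter (hs2.inter hs3) : MeasurableSet _)
  · apply (measurable_gaussD_part t).mul
    apply Measurable.ite _ measurable_const measurable_const
    have hs1 : MeasurableSet {c : (ℝ × ℝ) × ℝ | ∀ i, c.2 ≠ zs i} := by
      have : {c : (ℝ × ℝ) × ℝ | ∀ i, c.2 ≠ zs i} = Prod.snd ⁻¹' (Set.range zs)ᶜ := by
        ext c; simp [Set.range, eq_comm]
      rw [this]
      exact measurable_snd ((countable_range zs).measurableSet.compl)
    have hs2 : MeasurableSet {c : (ℝ × ℝ) × ℝ | t < c.1.1} :=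
      measurableSet_lt measurable_const (by fun_prop)
    exact (hs1.inter hs2 : MeasurableSet _)

instance sfinite_mu0 (zs : ℕ → ℝ) : SFinite (mu0 zs) := by unfold mu0; infer_instance

open scoped Classical in
lemma withDensity_dd_le {zs : ℕ → ℝ} (hinj : Function.Injective zs) {t : ℝ} {p : ℝ × ℝ}
    (i : ℕ) (hp2 : p.2 = zs i) (hle : p.1 ≤ t) :
    (mu0 zs).withDensity (dd t zs p) = Measure.dirac p.2 := by
  have hdd : dd t zs p = ({zs i} : Set ℝ).indicator (1 : ℝ → ENNReal) := by
    funext x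
    rw [dd_eq' hinj]
    have h2 : (if (∀ j, x ≠ zs j) ∧ t < p.1 then (1:ℝ) else 0) = 0 := by
      rw [if_neg]; rintro ⟨-, hlt⟩; exact absurd hle (not_le.mpr hlt)
    rw [h2, mul_zero, add_zero]
    by_cases hx : x = zs i
    · rw [if_pos ⟨hx.trans hp2.symm, ⟨i, hx⟩, hle⟩]
      simp [Set.indicator, hx]
    · rw [if_neg]
      · simp [Set.indicator, hx]
      · rintro ⟨hxp, -, -⟩; exact hx (hxp.trans hp2)
  rw [hdd, withDensity_indicator (measurableSet_singleton _), withDensity_one, hp2]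
  ext s hs
  rw [Measure.restrict_apply hs, mu0, Measure.add_apply,
    Measure.sum_apply _ (hs.inter (measurableSet_singleton _))]
  have hvol : volume (s ∩ {zs i}) = 0 :=
    measure_mono_null inter_subset_right Real.volume_singleton
  rw [hvol, zero_add, tsum_eq_single i]
  · rw [Measure.dirac_apply' _ (hs.inter (measurableSet_singleton _)),
      Measure.dirac_apply' _ hs]
    by_cases hzs : zs i ∈ s
    · simp [Set.indicator, hzs]
    · simp [Set.indicator, hzs]
  · intro j hj
    rw [Measure.dirac_apply' _ (hs.inter (measurableSet_singleton _))]
    have : zs j ∉ s ∩ {zs i} := by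
      rintro ⟨-, hmem⟩
      exact hj (hinj (by simpa using hmem))
    simp [Set.indicator, this]

open scoped Classical in
lemma withDensity_dd_none {zs : ℕ → ℝ} (hinj : Function.Injective zs) {t : ℝ} {p : ℝ × ℝ}
    (hp2 : ∀ i, p.2 ≠ zs i) (hle : p.1 ≤ t) :
    (mu0 zs).withDensity (dd t zs p) = 0 := by
  have hdd : dd t zs p = fun _ => 0 := by
    funext x
    rw [dd_eq' hinj]
    have h2 : (if (∀ j, x ≠ zs j) ∧ t < p.1 then (1:ℝ) else 0) = 0 := by
      rw [if_neg]; rintro ⟨-, hlt⟩; exact absurd hle (not_le.mpr hlt)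
    have h1 : (if x = p.2 ∧ (∃ i, x = zs i) ∧ p.1 ≤ t then (1:ℝ) else 0) = 0 := by
      rw [if_neg]; rintro ⟨hxp, ⟨i, hxi⟩, -⟩; exact hp2 i (hxp ▸ hxi)
    rw [h1, h2, mul_zero, add_zero]; simp
  rw [hdd]
  simpa using withDensity_zero (μ := mu0 zs)

open scoped Classical in
lemma withDensity_dd_gt {zs : ℕ → ℝ} (hinj : Function.Injective zs) {t : ℝ} {p : ℝ × ℝ}
    (ht : 0 < t) (hlt : t < p.1) :
    (mu0 zs).withDensity (dd t zs p)
      = gaussianReal ((t / p.1) * p.2) ((t * (p.1 - t) / p.1).toNNReal) := by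
  have hr : 0 < p.1 := ht.trans hlt
  have hv : 0 < t * (p.1 - t) / p.1 := div_pos (mul_pos ht (by linarith)) hr
  have hvnn : (((t * (p.1 - t) / p.1).toNNReal : NNReal) : ℝ) = t * (p.1 - t) / p.1 :=
    Real.coe_toNNReal _ hv.le
  have hvne : (t * (p.1 - t) / p.1).toNNReal ≠ 0 := by
    simp [Real.toNNReal_eq_zero, not_le, hv]
  rw [mu0, withDensity_add_measure, withDensity_sum]
  have hdirac : ∀ j, (Measure.dirac (zs j)).withDensity (dd t zs p) = 0 := by
    intro j
    have hval : dd t zs p (zs j) = 0 := by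
      rw [dd_eq' hinj]
      have h1 : (if zs j = p.2 ∧ (∃ i, zs j = zs i) ∧ p.1 ≤ t then (1:ℝ) else 0) = 0 := by
        rw [if_neg]; rintro ⟨-, -, hle⟩; exact absurd hlt (not_lt.mpr hle)
      have h2 : (if (∀ i, zs j ≠ zs i) ∧ t < p.1 then (1:ℝ) else 0) = 0 := by
        rw [if_neg]; rintro ⟨hne, -⟩; exact hne j rfl
      rw [h1, h2, mul_zero, add_zero]; simp
    ext s hs
    rw [withDensity_apply _ hs, setLIntegral_dirac]
    simp [hval]
  have hsum0 : (Measure.sum fun j => (Measure.dirac (zs j)).withDensity (dd t zs p)) = 0 := by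
    simp [hdirac]
  rw [hsum0, add_zero, gaussianReal_of_var_ne_zero _ hvne]
  apply withDensity_congr_ae
  have hnull : volume (Set.range zs) = 0 :=
    Set.Countable.measure_zero (countable_range zs) _
  filter_upwards [measure_eq_zero_iff_ae_notMem.mp hnull] with x hx
  rw [dd_eq' hinj]
  have h1 : (if x = p.2 ∧ (∃ i, x = zs i) ∧ p.1 ≤ t then (1:ℝ) else 0) = 0 := by
    rw [if_neg]; rintro ⟨-, ⟨i, hxi⟩, -⟩; exact hx ⟨i, hxi.symm⟩
  have h2 : (if (∀ i, x ≠ zs i) ∧ t < p.1 then (1:ℝ) else 0) = 1 := by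
    rw [if_pos ⟨fun i hxi => hx ⟨i, hxi.symm⟩, hlt⟩]
  rw [h1, h2, mul_one, zero_add, gaussianPDF_def, gaussianPDFReal_def]
  simp only [gaussD, hvnn]

noncomputable def kerD (t : ℝ) (zs : ℕ → ℝ) (hinj : Function.Injective zs) :
    Kernel (ℝ × ℝ) ℝ where
  toFun := fun p => (mu0 zs).withDensity (dd t zs p)
  measurable' := by
    apply Measure.measurable_of_measurable_coe
    intro s hs
    simp_rw [withDensity_apply _ hs]
    exact Measurable.lintegral_prod_right (f := fun p x => dd t zs p x) (measurable_dd hinj t)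

lemma kerD_apply (t : ℝ) (zs : ℕ → ℝ) (hinj : Function.Injective zs) (p : ℝ × ℝ) :
    kerD t zs hinj p = (mu0 zs).withDensity (dd t zs p) := rfl

lemma isFiniteKernel_kerD {t : ℝ} (ht : 0 < t) (zs : ℕ → ℝ) (hinj : Function.Injective zs) :
    IsFiniteKernel (kerD t zs hinj) := by
  refine ⟨⟨1, ENNReal.one_lt_top, fun p => ?_⟩⟩
  rw [kerD_apply]
  rcases le_or_gt p.1 t with hle | hlt
  · by_cases hp2 : ∃ i, p.2 = zs i
    · obtain ⟨i, hi⟩ := hp2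
      rw [withDensity_dd_le hinj i hi hle]
      simp
    · push_neg at hp2
      rw [withDensity_dd_none hinj hp2 hle]
      simp
  · rw [withDensity_dd_gt hinj ht hlt]
    exact le_of_eq measure_univ

open scoped Classical in
theorem stmt12 {Ω : Type*} [MeasurableSpace Ω] [StandardBorelSpace Ω] [Nonempty Ω]
    (P : Measure Ω) [IsProbabilityMeasure P]
    (W : ℝ → Ω → ℝ) (hW : IsBrownianMotion P W)
    (τ Z : Ω → ℝ) (hτ : Measurable τ) (hZ : Measurable Z) (hτpos : ∀ ω, 0 < τ ω)
    (hInd : IndepLPW P τ Z W)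
    (zs : ℕ → ℝ) (hinj : Function.Injective zs) (hZd : ∀ ω, ∃ i, Z ω = zs i)
    (ps : ℕ → ℝ) (hps : ∀ i, P {ω | Z ω = zs i} = ENNReal.ofReal (ps i)) :
    ∀ t : ℝ, 0 < t →
      ∀ᵐ p ∂(P.map fun ω => (τ ω, Z ω)),
        condDistrib (rbridge W τ Z t) (fun ω => (τ ω, Z ω)) P p =
          (volume + Measure.sum fun i => Measure.dirac (zs i)).withDensity (fun x =>
            ENNReal.ofReal (
              (∑' i, if x = zs i ∧ p.2 = zs i ∧ p.1 ≤ t then (1 : ℝ) else 0) +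
              gaussD (t * (p.1 - t) / p.1) x ((t / p.1) * p.2) *
                (if (∀ i, x ≠ zs i) ∧ t < p.1 then 1 else 0))) := by
  obtain ⟨hW0, hWc, hWm, hWlaw, hWind⟩ := id hW
  intro t ht
  set pZ : Ω → ℝ × ℝ := fun ω => (τ ω, Z ω) with hpZdef
  have hpZ : Measurable pZ := hτ.prodMk hZ
  set ν : Measure (ℝ × ℝ) := P.map pZ with hνdef
  haveI : IsProbabilityMeasure ν := Measure.isProbabilityMeasure_map hpZ.aemeasurable
  set Φ : Ω → ℚ → ℝ := fun ω q => W q ω with hΦdef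
  have hΦ : Measurable Φ := measurable_pi_lambda _ fun q => hWm q
  set μΦ : Measure (ℚ → ℝ) := P.map Φ with hμΦdef
  haveI : IsProbabilityMeasure μΦ := Measure.isProbabilityMeasure_map hΦ.aemeasurable
  have hYeq : rbridge W τ Z t = fun ω => FF t (pZ ω) (Φ ω) :=
    funext fun ω => (FF_eq_bridge W hWc t (pZ ω) ω).symm
  have hY : Measurable (rbridge W τ Z t) := by
    rw [hYeq]; exact FF_meas_comp hpZ hΦ
  haveI : IsFiniteKernel (kerD t zs hinj) := isFiniteKernel_kerD ht zs hinj
  have hae1 : ∀ᵐ p ∂ν, 0 < p.1 := by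
    rw [hνdef, ae_map_iff hpZ.aemeasurable (measurableSet_lt measurable_const measurable_fst)]
    exact Filter.Eventually.of_forall fun ω => hτpos ω
  have hae2 : ∀ᵐ p ∂ν, ∃ i, p.2 = zs i := by
    have hms : MeasurableSet {p : ℝ × ℝ | ∃ i, p.2 = zs i} := by
      have : {p : ℝ × ℝ | ∃ i, p.2 = zs i} = Prod.snd ⁻¹' (Set.range zs) := by
        ext c; simp [Set.range, eq_comm]
      rw [this]
      exact measurable_snd ((countable_range zs).measurableSet)
    rw [hνdef, ae_map_iff hpZ.aemeasurable hms]
    exact Filter.Eventually.of_forall fun ω => hZd ω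
  have hFFp : ∀ p : ℝ × ℝ, Measurable (fun y : ℚ → ℝ => FF t p y) :=
    fun p => FF_meas_comp measurable_const measurable_id
  have hkey : ∀ᵐ p ∂ν, kerD t zs hinj p = μΦ.map (fun y => FF t p y) := by
    filter_upwards [hae1, hae2] with p hp1 hp2
    have hmap : μΦ.map (fun y => FF t p y) = P.map (bridge W p.1 p.2 t) := by
      rw [hμΦdef, Measure.map_map (hFFp p) hΦ]
      congr 1
      funext ω
      exact FF_eq_bridge W hWc t p ω
    rcases le_or_gt p.1 t with hle | hlt
    · obtain ⟨i, hi⟩ := hp2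
      rw [hmap, bridge_law_le P W t p.1 p.2 hp1 hle, kerD_apply, withDensity_dd_le hinj i hi hle]
    · rw [hmap, bridge_law_lt P W hW t p.1 p.2 ht hlt, kerD_apply,
        withDensity_dd_gt hinj ht hlt]
  have hjoint : P.map (fun ω => (pZ ω, Φ ω)) = ν.prod μΦ := by
    have hψ : Measurable (fun w : ℝ → ℝ => fun q : ℚ => w q) :=
      measurable_pi_lambda _ fun q => measurable_pi_apply _
    have hi : IndepFun pZ Φ P := hInd.2.comp measurable_id hψ
    exact (indepFun_iff_map_prod_eq_prod_map_map hpZ.aemeasurable hΦ.aemeasurable).mp hi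
  have hGmeas : Measurable (fun c : (ℝ × ℝ) × (ℚ → ℝ) => (c.1, FF t c.1 c.2)) :=
    measurable_fst.prodMk (FF_meas t)
  have hcomp := Measure.map_map (μ := P)
    (g := fun c : (ℝ × ℝ) × (ℚ → ℝ) => (c.1, FF t c.1 c.2))
    (f := fun ω => (pZ ω, Φ ω)) hGmeas (hpZ.prodMk hΦ)
  rw [hjoint] at hcomp
  have hfun : (fun ω => (pZ ω, rbridge W τ Z t ω))
      = (fun c : (ℝ × ℝ) × (ℚ → ℝ) => (c.1, FF t c.1 c.2)) ∘ (fun ω => (pZ ω, Φ ω)) := by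
    funext ω
    simp only [Function.comp_apply]
    exact congrArg (Prod.mk (pZ ω)) ((FF_eq_bridge W hWc t (pZ ω) ω).symm)
  have hstep1 : P.map (fun ω => (pZ ω, rbridge W τ Z t ω))
      = (ν.prod μΦ).map (fun c : (ℝ × ℝ) × (ℚ → ℝ) => (c.1, FF t c.1 c.2)) := by
    rw [hfun, ← hcomp]
  have hrect : ∀ s : Set (ℝ × ℝ), MeasurableSet s → ∀ u : Set ℝ, MeasurableSet u →
      ((ν.prod μΦ).map (fun c : (ℝ × ℝ) × (ℚ → ℝ) => (c.1, FF t c.1 c.2))) (s ×ˢ u)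
        = (ν ⊗ₘ kerD t zs hinj) (s ×ˢ u) := by
    intro s hs u hu
    rw [Measure.map_apply hGmeas (hs.prod hu), Measure.prod_apply (hGmeas (hs.prod hu)),
      Measure.compProd_apply_prod hs hu]
    have hsect : ∀ p : ℝ × ℝ,
        (Prod.mk p ⁻¹' ((fun c : (ℝ × ℝ) × (ℚ → ℝ) => (c.1, FF t c.1 c.2)) ⁻¹' (s ×ˢ u)))
          = if p ∈ s then (fun y => FF t p y) ⁻¹' u else ∅ := by
      intro p
      ext y
      by_cases hp : p ∈ s <;> simp [hp, Set.mem_prod]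
    have hae : ∀ᵐ p ∂ν,
        μΦ (Prod.mk p ⁻¹' ((fun c : (ℝ × ℝ) × (ℚ → ℝ) => (c.1, FF t c.1 c.2)) ⁻¹' (s ×ˢ u)))
          = s.indicator (fun p => kerD t zs hinj p u) p := by
      filter_upwards [hkey] with p hk
      rw [hsect p]
      by_cases hp : p ∈ s
      · rw [if_pos hp, Set.indicator_of_mem hp, hk, Measure.map_apply (hFFp p) hu]
      · rw [if_neg hp, Set.indicator_of_notMem hp, measure_empty]
    rw [lintegral_congr_ae hae, lintegral_indicator hs]
  have hmain : P.map (fun ω => (pZ ω, rbridge W τ Z t ω)) = ν ⊗ₘ kerD t zs hinj := by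
    rw [hstep1]
    haveI : IsProbabilityMeasure ((ν.prod μΦ).map
        (fun c : (ℝ × ℝ) × (ℚ → ℝ) => (c.1, FF t c.1 c.2))) :=
      Measure.isProbabilityMeasure_map hGmeas.aemeasurable
    refine MeasureTheory.ext_of_generate_finite _ generateFrom_prod.symm isPiSystem_prod ?_ ?_
    · rintro - ⟨s, hs, u, hu, rfl⟩
      exact hrect s hs u hu
    · have := hrect Set.univ MeasurableSet.univ Set.univ MeasurableSet.univ
      simpa [Set.univ_prod_univ] using this
  have hfinal := condDistrib_ae_eq_of_measure_eq_compProd_of_measurable (μ := P) hpZ hY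
    (κ := kerD t zs hinj) hmain
  filter_upwards [hfinal] with p hp
  rw [hp, kerD_apply]
  rfl
end

section
/- Let ξ be the Brownian bridge information process with random length τ and two-point pinning point Z ∈ {z_1, z_2}. Then τ is a stopping time with respect to the completed natural filtration F^{ξ,c} of ξ. -/
open MeasureTheory ProbabilityTheory Real Set
open scoped ENNReal NNReal

lemma gauss_Icc_le {v : ℝ} (hv : 0 < v) (lo hi : ℝ) :
    gaussianReal 0 v.toNNReal (Set.Icc lo hi)
      ≤ ENNReal.ofReal ((hi - lo) * (Real.sqrt (2 * π * v))⁻¹) := by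
  have hv' : v.toNNReal ≠ 0 := by simp [Real.toNNReal_eq_zero, not_le, hv]
  have hcoe : ((v.toNNReal : ℝ)) = v := Real.coe_toNNReal v hv.le
  rw [gaussianReal_apply _ hv' _]
  have hbound : ∀ x : ℝ, gaussianPDF 0 v.toNNReal x
      ≤ ENNReal.ofReal ((Real.sqrt (2 * π * v))⁻¹) := by
    intro x
    rw [gaussianPDF]
    apply ENNReal.ofReal_le_ofReal
    rw [gaussianPDFReal, hcoe]
    calc (√(2 * π * v))⁻¹ * rexp (-(x - 0) ^ 2 / (2 * v))
        ≤ (√(2 * π * v))⁻¹ * 1 := by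
          apply mul_le_mul_of_nonneg_left _ (by positivity)
          apply Real.exp_le_one_iff.2
          have h1 : (0:ℝ) ≤ (x - 0)^2 := sq_nonneg _
          have h2v : (0:ℝ) < 2 * v := by linarith
          rw [neg_div]
          simp only [Left.neg_nonpos_iff]
          positivity
      _ = (√(2 * π * v))⁻¹ := mul_one _
  calc ∫⁻ x in Set.Icc lo hi, gaussianPDF 0 v.toNNReal x
      ≤ ∫⁻ _ in Set.Icc lo hi, ENNReal.ofReal ((Real.sqrt (2 * π * v))⁻¹) := by
        exact setLIntegral_mono (by measurability) fun x _ => hbound x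
    _ = ENNReal.ofReal ((Real.sqrt (2 * π * v))⁻¹) * volume (Set.Icc lo hi) := by
        rw [setLIntegral_const]
    _ ≤ ENNReal.ofReal ((hi - lo) * (Real.sqrt (2 * π * v))⁻¹) := by
        rw [Real.volume_Icc, ← ENNReal.ofReal_mul (by positivity)]
        exact ENNReal.ofReal_le_ofReal (by rw [mul_comm])

lemma prob_band {Ω : Type*} [MeasurableSpace Ω] (P : Measure Ω) [IsProbabilityMeasure P]
    (X Y : Ω → ℝ) (hX : Measurable X) (hY : Measurable Y) (hXY : IndepFun X Y P)
    {t : ℝ} (ht : 0 < t) (hlaw : P.map X = gaussianReal 0 t.toNNReal)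
    {γ : ℝ} (hγ : 0 < γ) (β η : ℝ) (hη : 0 ≤ η)
    (gauss_Icc_le : ∀ {v : ℝ}, 0 < v → ∀ lo hi : ℝ,
      gaussianReal 0 v.toNNReal (Set.Icc lo hi)
        ≤ ENNReal.ofReal ((hi - lo) * (Real.sqrt (2 * π * v))⁻¹)) :
    P {ω | |γ * X ω - Y ω + β| ≤ η}
      ≤ ENNReal.ofReal (2 * η / γ * (Real.sqrt (2 * π * t))⁻¹) := by
  set D : Set (ℝ × ℝ) := {p | |γ * p.2 - p.1 + β| ≤ η} with hD
  have hDm : MeasurableSet D := by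
    apply measurableSet_le (Measurable.abs ?_) measurable_const
    fun_prop
  have hpre : {ω | |γ * X ω - Y ω + β| ≤ η} = (fun ω => (Y ω, X ω)) ⁻¹' D := rfl
  rw [hpre, ← Measure.map_apply (hY.prodMk hX) hDm]
  have hmap : P.map (fun ω => (Y ω, X ω)) = (P.map Y).prod (P.map X) :=
    (indepFun_iff_map_prod_eq_prod_map_map hY.aemeasurable hX.aemeasurable).mp hXY.symm
  rw [hmap, Measure.prod_apply hDm]
  have hslice : ∀ y : ℝ, Prod.mk y ⁻¹' D = Set.Icc ((y - β - η) / γ) ((y - β + η) / γ) := by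
    intro y
    ext x
    simp only [hD, Set.mem_preimage, Set.mem_setOf_eq, Set.mem_Icc, abs_le]
    constructor
    · rintro ⟨h1, h2⟩
      constructor
      · rw [div_le_iff₀ hγ]; linarith
      · rw [le_div_iff₀ hγ]; linarith
    · rintro ⟨h1, h2⟩
      rw [div_le_iff₀ hγ] at h1
      rw [le_div_iff₀ hγ] at h2
      constructor <;> linarith
  have hbd : ∀ y : ℝ, (P.map X) (Prod.mk y ⁻¹' D)
      ≤ ENNReal.ofReal (2 * η / γ * (Real.sqrt (2 * π * t))⁻¹) := by
    intro y
    rw [hslice y, hlaw]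
    refine (gauss_Icc_le ht _ _).trans (ENNReal.ofReal_le_ofReal ?_)
    have : (y - β + η) / γ - (y - β - η) / γ = 2 * η / γ := by
      field_simp; ring
    rw [this]
  haveI : IsProbabilityMeasure (P.map Y) := Measure.isProbabilityMeasure_map hY.aemeasurable
  calc ∫⁻ y, (P.map X) (Prod.mk y ⁻¹' D) ∂(P.map Y)
      ≤ ∫⁻ _, ENNReal.ofReal (2 * η / γ * (Real.sqrt (2 * π * t))⁻¹) ∂(P.map Y) :=
        lintegral_mono hbd
    _ = ENNReal.ofReal (2 * η / γ * (Real.sqrt (2 * π * t))⁻¹) := by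
        rw [lintegral_const, measure_univ, mul_one]

noncomputable def clx (m : ℕ) (r : ℝ) : ℝ := ((⌈(m : ℝ) * r⌉ : ℤ) : ℝ) / m

lemma clx_ge {m : ℕ} (hm : 0 < m) (r : ℝ) : r ≤ clx m r := by
  have hm' : (0:ℝ) < m := by exact_mod_cast hm
  rw [clx, le_div_iff₀ hm', mul_comm]
  exact Int.le_ceil _

lemma clx_lt {m : ℕ} (hm : 0 < m) (r : ℝ) : clx m r < r + 1 / m := by
  have hm' : (0:ℝ) < m := by exact_mod_cast hm
  rw [clx, div_lt_iff₀ hm']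
  have := Int.ceil_lt_add_one ((m : ℝ) * r)
  have : ((⌈(m:ℝ) * r⌉ : ℤ) : ℝ) < m * r + 1 := this
  calc ((⌈(m:ℝ) * r⌉ : ℤ) : ℝ) < m * r + 1 := this
    _ = (r + 1 / m) * m := by field_simp

lemma clx_tendsto (r : ℝ) :
    Filter.Tendsto (fun n : ℕ => clx (n + 1) r) Filter.atTop (nhds r) := by
  apply tendsto_of_tendsto_of_tendsto_of_le_of_le (g := fun _ : ℕ => r)
    (h := fun n : ℕ => r + 1 / ((n : ℝ) + 1)) tendsto_const_nhds
  · have : Filter.Tendsto (fun n : ℕ => 1 / ((n : ℝ) + 1)) Filter.atTop (nhds 0) :=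
      tendsto_one_div_add_atTop_nhds_zero_nat
    simpa using tendsto_const_nhds.add this
  · exact fun n => clx_ge (Nat.succ_pos n) _
  · intro n
    have := clx_lt (m := n + 1) (Nat.succ_pos n) r
    push_cast at this ⊢
    linarith

lemma measurable_Wcl {Ω : Type*} [MeasurableSpace Ω] {W : ℝ → Ω → ℝ}
    (hWm : ∀ t, Measurable (W t)) {τ : Ω → ℝ} (hτ : Measurable τ) (m : ℕ) :
    Measurable fun ω => W (clx m (τ ω)) ω := by
  intro s hs
  have key : (fun ω => W (clx m (τ ω)) ω) ⁻¹' s =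
      ⋃ k : ℤ, ((fun ω => (m : ℝ) * τ ω) ⁻¹' (Set.Ioc ((k : ℝ) - 1) (k : ℝ))
        ∩ W ((k : ℝ) / m) ⁻¹' s) := by
    ext ω
    simp only [Set.mem_preimage, Set.mem_iUnion, Set.mem_inter_iff, Set.mem_Ioc]
    constructor
    · intro h
      refine ⟨⌈(m : ℝ) * τ ω⌉, ⟨by push_cast; linarith [Int.ceil_lt_add_one ((m:ℝ) * τ ω)],
        Int.le_ceil _⟩, ?_⟩
      rwa [clx] at h
    · rintro ⟨k, ⟨h1, h2⟩, h3⟩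
      have hk : ⌈(m : ℝ) * τ ω⌉ = k := by
        rw [Int.ceil_eq_iff]
        · exact ⟨by push_cast; linarith, h2⟩
      have : clx m (τ ω) = (k : ℝ) / m := by rw [clx, hk]
      rwa [this]
  rw [key]
  refine MeasurableSet.iUnion fun k => MeasurableSet.inter ?_ (hWm _ hs)
  exact (measurable_const.mul hτ) measurableSet_Ioc

lemma measurable_Wtau {Ω : Type*} [MeasurableSpace Ω] {W : ℝ → Ω → ℝ}
    (hWm : ∀ t, Measurable (W t)) (hWc : ∀ ω, Continuous fun t => W t ω)
    {τ : Ω → ℝ} (hτ : Measurable τ) :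
    Measurable fun ω => W (τ ω) ω := by
  have hcl : ∀ ω, Filter.Tendsto (fun n : ℕ => clx (n + 1) (τ ω)) Filter.atTop (nhds (τ ω)) := by
    intro ω
    apply tendsto_of_tendsto_of_tendsto_of_le_of_le (g := fun _ : ℕ => τ ω)
      (h := fun n : ℕ => τ ω + 1 / ((n : ℝ) + 1)) tendsto_const_nhds
    · have : Filter.Tendsto (fun n : ℕ => 1 / ((n : ℝ) + 1)) Filter.atTop (nhds 0) :=
        tendsto_one_div_add_atTop_nhds_zero_nat
      simpa using tendsto_const_nhds.add this
    · exact fun n => clx_ge (Nat.succ_pos n) _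
    · intro n
      have := clx_lt (m := n + 1) (Nat.succ_pos n) (τ ω)
      push_cast at this ⊢
      linarith
  apply measurable_of_tendsto_metrizable (f := fun n : ℕ => fun ω => W (clx (n + 1) (τ ω)) ω)
    (fun n => measurable_Wcl hWm hτ (n + 1))
  rw [tendsto_pi_nhds]
  intro ω
  exact ((hWc ω).tendsto (τ ω)).comp (hcl ω)

set_option maxHeartbeats 1000000 in
lemma main_zero {Ω : Type*} [MeasurableSpace Ω] (P : Measure Ω) [IsProbabilityMeasure P]
    (W : ℝ → Ω → ℝ) (τ Z : Ω → ℝ) (hW : IsBrownianMotion P W)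
    (hτ : Measurable τ) (hZ : Measurable Z) (hτpos : ∀ ω, 0 < τ ω)
    (hInd : IndepLPW P τ Z W) (z1 z2 : ℝ) (hz : z1 ≠ z2)
    (hZtwo : ∀ ω, Z ω = z1 ∨ Z ω = z2)
    {t : ℝ} (ht : 0 < t) (c : ℝ) :
    P {ω | t < τ ω ∧ rbridge W τ Z t ω = c} = 0 := by
  obtain ⟨hW0, hWc, hWm, hWlaw, hWind⟩ := hW
  set Φ : ℝ → ℝ → Ω → ℝ :=
    fun r z ω => (r - t) * W t ω - t * (W r ω - W t ω) + t * z - c * r with hΦ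
  set E := {ω | t < τ ω ∧ rbridge W τ Z t ω = c} with hE
  have hsq : (0:ℝ) < Real.sqrt (2 * π * t) := Real.sqrt_pos.2 (by positivity)
  have hPhiE : ∀ ω ∈ E, Φ (τ ω) (Z ω) ω = 0 := by
    rintro ω ⟨h1, h2⟩
    have hτ0 : τ ω ≠ 0 := (hτpos ω).ne'
    rw [rbridge, bridge, min_eq_left h1.le] at h2
    field_simp at h2
    simp only [hΦ]
    nlinarith [h2]
  have key : ∀ m : ℕ, 0 < m → ∀ a η : ℝ, t < a → 0 < η →
      P E ≤ P (τ ⁻¹' Set.Ioc t a)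
        + P {ω | η < |Φ (clx m (τ ω)) (Z ω) ω - Φ (τ ω) (Z ω) ω|}
        + ENNReal.ofReal (2 * η / (a - t) * (Real.sqrt (2 * π * t))⁻¹) := by
    intro m hm a η ha hη
    have hm' : (0:ℝ) < m := by exact_mod_cast hm
    set b := ENNReal.ofReal (2 * η / (a - t) * (Real.sqrt (2 * π * t))⁻¹) with hb
    set zi : Bool → ℝ := fun i => if i then z1 else z2 with hzi
    set Bs : ℤ × Bool → Set (ℝ × ℝ) := fun p =>
      (Set.Ioc (((p.1 : ℝ) - 1) / m) ((p.1 : ℝ) / m) ∩ Set.Ioi a) ×ˢ ({zi p.2} : Set ℝ)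
      with hBs
    set S : ℤ × Bool → Set Ω := fun p => (fun ω => (τ ω, Z ω)) ⁻¹' Bs p with hS
    set T : ℤ × Bool → Set Ω := fun p =>
      {ω | |Φ ((p.1 : ℝ) / m) (zi p.2) ω| ≤ η} with hT
    have hSmem : ∀ p ω, ω ∈ S p ↔
        (((p.1 : ℝ) - 1) / m < τ ω ∧ τ ω ≤ (p.1 : ℝ) / m) ∧ a < τ ω ∧ Z ω = zi p.2 := by
      intro p ω
      simp only [hS, hBs, Set.mem_preimage, Set.mem_prod, Set.mem_inter_iff, Set.mem_Ioc,
        Set.mem_Ioi, Set.mem_singleton_iff]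
      tauto
    have incl : E ⊆ τ ⁻¹' Set.Ioc t a
        ∪ ({ω | η < |Φ (clx m (τ ω)) (Z ω) ω - Φ (τ ω) (Z ω) ω|} ∪ ⋃ p, S p ∩ T p) := by
      intro ω hωE
      by_cases hca : τ ω ≤ a
      · exact Or.inl ⟨hωE.1, hca⟩
      by_cases hcb : η < |Φ (clx m (τ ω)) (Z ω) ω - Φ (τ ω) (Z ω) ω|
      · exact Or.inr (Or.inl hcb)
      refine Or.inr (Or.inr ?_)
      set k := ⌈(m : ℝ) * τ ω⌉ with hk
      set i : Bool := if Z ω = z1 then true else false with hi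
      have hzii : zi i = Z ω := by
        rcases hZtwo ω with h | h <;> simp [hzi, hi, h, hz.symm]
      have hclk : clx m (τ ω) = (k : ℝ) / m := by rw [clx, hk]
      refine Set.mem_iUnion.2 ⟨(k, i), ?_, ?_⟩
      · rw [hSmem]
        refine ⟨⟨?_, ?_⟩, lt_of_not_ge hca, hzii.symm⟩
        · rw [div_lt_iff₀ hm']
          have h3 := Int.ceil_lt_add_one ((m : ℝ) * τ ω)
          rw [← hk] at h3
          nlinarith
        · have h4 := clx_ge hm (τ ω); rwa [hclk] at h4
      · have h0 := hPhiE ω hωE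
        rw [h0] at hcb
        push_neg at hcb
        simp only [sub_zero] at hcb
        have : Φ ((k:ℝ)/m) (zi i) ω = Φ (clx m (τ ω)) (Z ω) ω := by rw [hclk, hzii]
        simp only [hT, Set.mem_setOf_eq, this]
        exact hcb
    have hTpre : ∀ p : ℤ × Bool, T p = (fun ω (s : ℝ) => W s ω) ⁻¹'
        {f : ℝ → ℝ | |((p.1 : ℝ) / m - t) * f t - t * (f ((p.1 : ℝ) / m) - f t)
          + t * zi p.2 - c * ((p.1 : ℝ) / m)| ≤ η} := by
      intro p
      ext ω
      simp only [hT, hΦ, Set.mem_preimage, Set.mem_setOf_eq]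
    have hbd : ∀ p : ℤ × Bool, P (S p ∩ T p) ≤ P (S p) * b := by
      intro p
      by_cases hka : a < (p.1 : ℝ) / m
      · have hDm : MeasurableSet {f : ℝ → ℝ | |((p.1 : ℝ) / m - t) * f t
            - t * (f ((p.1 : ℝ) / m) - f t) + t * zi p.2 - c * ((p.1 : ℝ) / m)| ≤ η} := by
          apply measurableSet_le (Measurable.abs ?_) measurable_const
          have h1 : Measurable fun f : ℝ → ℝ => f t := measurable_pi_apply t
          have h2 : Measurable fun f : ℝ → ℝ => f ((p.1 : ℝ) / m) := measurable_pi_apply _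
          fun_prop
        have hBsm : MeasurableSet (Bs p) :=
          (measurableSet_Ioc.inter measurableSet_Ioi).prod (measurableSet_singleton _)
        have hfact := (indepFun_iff_measure_inter_preimage_eq_mul.mp hInd.2)
          (Bs p) _ hBsm hDm
        rw [hS, hTpre p, hfact]
        have hγ : (0:ℝ) < (p.1 : ℝ) / m - t := by linarith
        have hbase := hWind 0 t t ((p.1 : ℝ) / m) le_rfl ht.le le_rfl (by linarith)
        have hfun : (fun ω => W t ω - W 0 ω) = W t := funext fun ω => by rw [hW0 ω]; ring
        rw [hfun] at hbase
        have hYm : Measurable fun ω => t * (W ((p.1 : ℝ) / m) ω - W t ω) :=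
          ((hWm _).sub (hWm t)).const_mul t
        have hXY : IndepFun (W t) (fun ω => t * (W ((p.1 : ℝ) / m) ω - W t ω)) P := by
          have := hbase.comp measurable_id (measurable_const_mul t)
          exact this
        have hlaw : P.map (W t) = gaussianReal 0 t.toNNReal := by
          have := hWlaw 0 t le_rfl ht.le
          rw [hfun, sub_zero] at this
          exact this
        have hset : ((fun ω (s : ℝ) => W s ω) ⁻¹'
            {f : ℝ → ℝ | |((p.1 : ℝ) / m - t) * f t - t * (f ((p.1 : ℝ) / m) - f t)
              + t * zi p.2 - c * ((p.1 : ℝ) / m)| ≤ η})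
            = {ω | |((p.1 : ℝ) / m - t) * W t ω - t * (W ((p.1 : ℝ) / m) ω - W t ω)
              + (t * zi p.2 - c * ((p.1 : ℝ) / m))| ≤ η} := by
          ext ω
          simp only [Set.mem_preimage, Set.mem_setOf_eq]
          rw [show ((p.1 : ℝ) / m - t) * W t ω - t * (W ((p.1 : ℝ) / m) ω - W t ω)
              + t * zi p.2 - c * ((p.1 : ℝ) / m)
            = ((p.1 : ℝ) / m - t) * W t ω - t * (W ((p.1 : ℝ) / m) ω - W t ω)
              + (t * zi p.2 - c * ((p.1 : ℝ) / m)) from by ring]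
        have hTb : P ((fun ω (s : ℝ) => W s ω) ⁻¹'
            {f : ℝ → ℝ | |((p.1 : ℝ) / m - t) * f t - t * (f ((p.1 : ℝ) / m) - f t)
              + t * zi p.2 - c * ((p.1 : ℝ) / m)| ≤ η}) ≤ b := by
          rw [hset]
          refine (prob_band P (W t) _ (hWm t) hYm hXY ht hlaw hγ
            (t * zi p.2 - c * ((p.1 : ℝ) / m)) η hη.le
            (fun hv lo hi => gauss_Icc_le hv lo hi)).trans ?_
          rw [hb]
          apply ENNReal.ofReal_le_ofReal
          apply mul_le_mul_of_nonneg_right _ (by positivity)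
          exact div_le_div_of_nonneg_left (by positivity) (by linarith) (by linarith)
        exact mul_le_mul_right hTb _
      · have hSempty : S p = ∅ := by
          ext ω
          rw [hSmem]
          simp only [Set.mem_empty_iff_false, iff_false, not_and]
          push_neg at hka
          rintro ⟨_, h1⟩
          intro h2
          exact absurd rfl (by intro _; linarith [h2, h1, hka] : ¬ (True = True))
        rw [Set.inter_comm, hSempty, Set.inter_empty]
        simp
    have hSdisj : Pairwise (Function.onFun Disjoint S) := by
      rintro ⟨k, i⟩ ⟨l, j⟩ hne
      rw [Function.onFun, Set.disjoint_left]
      intro ω h1 h2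
      rw [hSmem] at h1 h2
      rcases eq_or_ne k l with rfl | hkl
      · have hij : i ≠ j := fun h => hne (by rw [h])
        have hzz : zi i = zi j := by rw [← h1.2.2, ← h2.2.2]
        rcases i <;> rcases j <;> simp only [hzi, if_true, if_false] at hzz <;>
          first
            | exact hij rfl
            | exact hz hzz.symm
            | exact hz hzz
      · rcases lt_or_gt_of_ne hkl with hlt | hlt
        · have hkl1 : (k : ℝ) ≤ (l : ℝ) - 1 := by
            have : (k : ℝ) + 1 ≤ l := by exact_mod_cast hlt
            linarith
          have : (k : ℝ) / m ≤ ((l : ℝ) - 1) / m := by gcongr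
          linarith [h1.1.2, h2.1.1]
        · have hkl1 : (l : ℝ) ≤ (k : ℝ) - 1 := by
            have : (l : ℝ) + 1 ≤ k := by exact_mod_cast hlt
            linarith
          have : (l : ℝ) / m ≤ ((k : ℝ) - 1) / m := by gcongr
          linarith [h2.1.2, h1.1.1]
    have hSm : ∀ p, MeasurableSet (S p) := fun p =>
      (hτ.prodMk hZ) ((measurableSet_Ioc.inter measurableSet_Ioi).prod
        (measurableSet_singleton _))
    calc P E ≤ P (τ ⁻¹' Set.Ioc t a
        ∪ ({ω | η < |Φ (clx m (τ ω)) (Z ω) ω - Φ (τ ω) (Z ω) ω|} ∪ ⋃ p, S p ∩ T p)) :=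
          measure_mono incl
      _ ≤ P (τ ⁻¹' Set.Ioc t a)
          + P ({ω | η < |Φ (clx m (τ ω)) (Z ω) ω - Φ (τ ω) (Z ω) ω|} ∪ ⋃ p, S p ∩ T p) :=
          measure_union_le _ _
      _ ≤ P (τ ⁻¹' Set.Ioc t a)
          + (P {ω | η < |Φ (clx m (τ ω)) (Z ω) ω - Φ (τ ω) (Z ω) ω|}
            + P (⋃ p, S p ∩ T p)) := by
          gcongr
          exact measure_union_le _ _
      _ ≤ P (τ ⁻¹' Set.Ioc t a)
          + (P {ω | η < |Φ (clx m (τ ω)) (Z ω) ω - Φ (τ ω) (Z ω) ω|} + b) := by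
          gcongr
          calc P (⋃ p, S p ∩ T p) ≤ ∑' p, P (S p ∩ T p) := measure_iUnion_le _
            _ ≤ ∑' p, P (S p) * b := ENNReal.tsum_le_tsum hbd
            _ = (∑' p, P (S p)) * b := ENNReal.tsum_mul_right
            _ ≤ 1 * b := by
                gcongr
                rw [← measure_iUnion hSdisj hSm]
                exact (measure_mono (Set.subset_univ _)).trans (le_of_eq measure_univ)
            _ = b := one_mul b
      _ = _ := by rw [add_assoc]
  -- conclude
  have hWτm : Measurable fun ω => W (τ ω) ω := measurable_Wtau hWm hWc hτ
  have key2 : ∀ ε : ℝ, 0 < ε → P E ≤ ENNReal.ofReal ε := by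
    intro ε hε
    have hε3 : (0:ℝ) < ε / 3 := by linarith
    have hε3' : (0:ℝ≥0∞) < ENNReal.ofReal (ε / 3) := ENNReal.ofReal_pos.2 hε3
    set Q : ℕ → Set Ω := fun j => τ ⁻¹' Set.Ioc t (t + 1 / ((j : ℝ) + 1)) with hQ
    have hQm : ∀ j, NullMeasurableSet (Q j) P := fun j =>
      (hτ measurableSet_Ioc).nullMeasurableSet
    have hQanti : Antitone Q := by
      intro j j' hjj'
      have h1 : (1:ℝ) / ((j' : ℝ) + 1) ≤ 1 / ((j : ℝ) + 1) := by
        apply one_div_le_one_div_of_le (by positivity)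
        have : (j : ℝ) ≤ (j' : ℝ) := by exact_mod_cast hjj'
        linarith
      exact Set.preimage_mono (Set.Ioc_subset_Ioc_right (by linarith))
    have hQempty : (⋂ j, Q j) = ∅ := by
      ext ω
      simp only [hQ, Set.mem_iInter, Set.mem_preimage, Set.mem_Ioc, Set.mem_empty_iff_false,
        iff_false, not_forall, not_and, not_le]
      by_cases hω : t < τ ω
      · obtain ⟨j, hj⟩ := exists_nat_one_div_lt (sub_pos.2 hω)
        exact ⟨j, fun _ => by linarith⟩
      · exact ⟨0, fun h => absurd h hω⟩
    have hQtend : Filter.Tendsto (fun j => P (Q j)) Filter.atTop (nhds 0) := by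
      have := tendsto_measure_iInter_atTop hQm hQanti ⟨0, measure_ne_top P _⟩
      rwa [hQempty, measure_empty] at this
    obtain ⟨j, hj⟩ := (hQtend.eventually_lt_const hε3').exists
    set a := t + 1 / ((j : ℝ) + 1) with ha'
    have ha : t < a := by
      have : (0:ℝ) < 1 / ((j : ℝ) + 1) := by positivity
      rw [ha']; linarith
    set η := ε / 3 * (a - t) * Real.sqrt (2 * π * t) / 2 with hη'
    have hηpos : 0 < η := by
      have h1 : (0:ℝ) < a - t := by linarith
      rw [hη']; positivity
    have hbeq : ENNReal.ofReal (2 * η / (a - t) * (Real.sqrt (2 * π * t))⁻¹)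
        = ENNReal.ofReal (ε / 3) := by
      congr 1
      rw [hη']
      have h1 : a - t ≠ 0 := by intro h; linarith [ha]
      field_simp
    set D : ℕ → Set Ω := fun n =>
      {ω | η < |Φ (clx (n + 1) (τ ω)) (Z ω) ω - Φ (τ ω) (Z ω) ω|} with hD
    have hclm : ∀ n : ℕ, Measurable fun ω => clx (n + 1) (τ ω) := by
      intro n
      have : Measurable fun ω => (⌈((n + 1 : ℕ) : ℝ) * τ ω⌉ : ℤ) :=
        (measurable_const.mul hτ).ceil
      exact (measurable_from_top.comp this).div_const _
    have hΦclm : ∀ n : ℕ, Measurable fun ω => Φ (clx (n + 1) (τ ω)) (Z ω) ω := by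
      intro n
      simp only [hΦ]
      exact (((((hclm n).sub measurable_const).mul (hWm t)).sub
        (((measurable_Wcl hWm hτ (n + 1)).sub (hWm t)).const_mul t)).add
        (hZ.const_mul t)).sub ((hclm n).const_mul c)
    have hΦτm : Measurable fun ω => Φ (τ ω) (Z ω) ω := by
      simp only [hΦ]
      exact ((((hτ.sub measurable_const).mul (hWm t)).sub
        ((hWτm.sub (hWm t)).const_mul t)).add (hZ.const_mul t)).sub (hτ.const_mul c)
    have hDmeas : ∀ n, MeasurableSet (D n) := by
      intro n
      exact measurableSet_lt measurable_const ((hΦclm n).sub hΦτm).abs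
    have hDlim : ∀ ω, Filter.Tendsto (fun n : ℕ => Φ (clx (n + 1) (τ ω)) (Z ω) ω)
        Filter.atTop (nhds (Φ (τ ω) (Z ω) ω)) := by
      intro ω
      have hcont : Continuous fun r => Φ r (Z ω) ω := by
        simp only [hΦ]
        have h1 : Continuous fun r : ℝ => W r ω := hWc ω
        fun_prop
      exact (hcont.tendsto (τ ω)).comp (clx_tendsto (τ ω))
    have hPD : Filter.Tendsto (fun n => P (D n)) Filter.atTop (nhds 0) := by
      have heq : ∀ n, P (D n) = ∫⁻ ω, (D n).indicator (fun _ => (1:ℝ≥0∞)) ω ∂P :=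
        fun n => (lintegral_indicator_one (hDmeas n)).symm
      have hconc := tendsto_lintegral_of_dominated_convergence (μ := P)
        (F := fun n => (D n).indicator fun _ => (1:ℝ≥0∞)) (f := fun _ => 0)
        (bound := fun _ => 1)
        (fun n => measurable_const.indicator (hDmeas n))
        (fun n => Filter.Eventually.of_forall fun ω => Set.indicator_le_self' (fun _ _ => by simp) ω)
        (by simp [lintegral_one, measure_univ])
        ?_
      · simp only [lintegral_zero] at hconc
        exact Filter.Tendsto.congr (fun n => (heq n).symm) hconc
      · refine Filter.Eventually.of_forall fun ω => ?_
        have h1 : Filter.Tendsto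
            (fun n : ℕ => |Φ (clx (n + 1) (τ ω)) (Z ω) ω - Φ (τ ω) (Z ω) ω|)
            Filter.atTop (nhds 0) := by
          have h0 := Filter.Tendsto.abs ((hDlim ω).sub
            (tendsto_const_nhds (x := Φ (τ ω) (Z ω) ω) (f := Filter.atTop (α := ℕ))))
          simpa using h0
        have h2 := h1.eventually_lt_const hηpos
        refine Filter.Tendsto.congr' ?_ tendsto_const_nhds
        filter_upwards [h2] with n hn
        have : ω ∉ D n := by
          simp only [hD, Set.mem_setOf_eq, not_lt]
          exact hn.le
        exact (Set.indicator_of_notMem this _).symm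
    obtain ⟨n, hn⟩ := (hPD.eventually_lt_const hε3').exists
    calc P E ≤ P (τ ⁻¹' Set.Ioc t a) + P (D n)
          + ENNReal.ofReal (2 * η / (a - t) * (Real.sqrt (2 * π * t))⁻¹) :=
        key (n + 1) n.succ_pos a η ha hηpos
      _ ≤ ENNReal.ofReal (ε / 3) + ENNReal.ofReal (ε / 3) + ENNReal.ofReal (ε / 3) :=
        add_le_add (add_le_add hj.le hn.le) (le_of_eq hbeq)
      _ = ENNReal.ofReal ε := by
        rw [← ENNReal.ofReal_add (by positivity) (by positivity),
          ← ENNReal.ofReal_add (by positivity) (by positivity)]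
        congr 1
        ring
  refine le_antisymm ?_ (zero_le)
  have hofseq : Filter.Tendsto (fun n : ℕ => ENNReal.ofReal (1 / ((n : ℝ) + 1)))
      Filter.atTop (nhds 0) := by
    rw [← ENNReal.ofReal_zero]
    exact (ENNReal.continuous_ofReal.tendsto 0).comp tendsto_one_div_add_atTop_nhds_zero_nat
  exact ge_of_tendsto' hofseq fun n => key2 _ (by positivity)

theorem stmt16 {Ω : Type*} [MeasurableSpace Ω] (P : Measure Ω) [IsProbabilityMeasure P]
    (W : ℝ → Ω → ℝ) (hW : IsBrownianMotion P W)
    (τ Z : Ω → ℝ) (hτ : Measurable τ) (hZ : Measurable Z) (hτpos : ∀ ω, 0 < τ ω)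
    (hInd : IndepLPW P τ Z W)
    (z1 z2 p1 : ℝ) (hz : z1 ≠ z2) (hp1 : 0 < p1) (hp1' : p1 < 1)
    (hZtwo : ∀ ω, Z ω = z1 ∨ Z ω = z2)
    (hPz1 : P {ω | Z ω = z1} = ENNReal.ofReal p1) :
    ∀ t : ℝ, MeasurableSet[natFc P (rbridge W τ Z) t] {ω | τ ω ≤ t} := by
  intro t
  by_cases ht : 0 < t
  · have hA : MeasurableSet[natFc P (rbridge W τ Z) t]
        ((rbridge W τ Z t) ⁻¹' {z1, z2}) := by
      have h1 : MeasurableSet[MeasurableSpace.comap (rbridge W τ Z t) Real.measurableSpace]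
          ((rbridge W τ Z t) ⁻¹' {z1, z2}) :=
        ⟨{z1, z2}, (measurableSet_singleton z2).insert z1, rfl⟩
      have h2 : MeasurableSpace.comap (rbridge W τ Z t) Real.measurableSpace ≤
          natFc P (rbridge W τ Z) t := by
        refine le_trans ?_ le_sup_left
        exact le_iSup₂ (f := fun s (_ : s ∈ Set.Iic t) =>
          MeasurableSpace.comap (rbridge W τ Z s) Real.measurableSpace) t
          (Set.mem_Iic.mpr le_rfl)
      exact h2 _ h1
    set N := {ω | t < τ ω ∧ rbridge W τ Z t ω = z1}
      ∪ {ω | t < τ ω ∧ rbridge W τ Z t ω = z2} with hNdef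
    have hPN : P N = 0 := by
      apply le_antisymm _ (zero_le)
      calc P N ≤ P {ω | t < τ ω ∧ rbridge W τ Z t ω = z1}
            + P {ω | t < τ ω ∧ rbridge W τ Z t ω = z2} := measure_union_le _ _
        _ = 0 := by
          rw [main_zero P W τ Z hW hτ hZ hτpos hInd z1 z2 hz hZtwo ht z1,
            main_zero P W τ Z hW hτ hZ hτpos hInd z1 z2 hz hZtwo ht z2, add_zero]
    have hN : MeasurableSet[natFc P (rbridge W τ Z) t] N := by
      have h1 : MeasurableSet[MeasurableSpace.generateFrom {s : Set Ω | P s = 0}] N :=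
        MeasurableSpace.measurableSet_generateFrom hPN
      have h2 : MeasurableSpace.generateFrom {s : Set Ω | P s = 0} ≤
          natFc P (rbridge W τ Z) t := le_sup_right
      exact h2 _ h1
    have hEq : {ω | τ ω ≤ t} = (rbridge W τ Z t) ⁻¹' {z1, z2} ∩ Nᶜ := by
      ext ω
      simp only [Set.mem_setOf_eq, Set.mem_inter_iff, Set.mem_preimage,
        Set.mem_insert_iff, Set.mem_singleton_iff, Set.mem_compl_iff, hNdef,
        Set.mem_union, not_or, not_and]
      constructor
      · intro hτt
        have hval : rbridge W τ Z t ω = Z ω := by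
          rw [rbridge, bridge, min_eq_right hτt, div_self (hτpos ω).ne']
          ring
        refine ⟨by rw [hval]; exact hZtwo ω, ?_, ?_⟩
        · intro h; exact absurd h (not_lt.2 hτt)
        · intro h; exact absurd h (not_lt.2 hτt)
      · rintro ⟨hmem, h1, h2⟩
        by_contra hno
        push_neg at hno
        rcases hmem with h | h
        · exact h1 hno h
        · exact h2 hno h
    rw [hEq]
    exact hA.inter hN.compl
  · have hempty : {ω | τ ω ≤ t} = ∅ := by
      ext ω
      simp only [Set.mem_setOf_eq, Set.mem_empty_iff_false, iff_false, not_le]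
      push_neg at ht
      linarith [hτpos ω]
    rw [hempty]
    exact @MeasurableSpace.measurableSet_empty Ω (natFc P (rbridge W τ Z) t)
end
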